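/- arXiv:0906.5195 — 6 statements merged into one kernel-verified Lean document; each statement's English description precedes it below -/
import Mathlib

section
/- Let (b_1,…,b_r) be a sequence of integers with every b_i ≥ 2 whose Hirzebruch–Jung continued fraction equals d·n²/(d·n·a − 1) for integers d ≥ 1 and coprime n > a ≥ 1. Set m = 2n − a. Then m > n, gcd(m, n) = 1, and the sequence (2, b_1, …, b_{r−1}, b_r + 1) has every term ≥ 2 and Hirzebruch–Jung continued fraction equal to d·m²/(d·m·n − 1). In particular, the set of T-chain data is closed under the operation (b_1,…,b_r) ↦ (2, b_1, …, b_{r−1}, b_r + 1). -/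
/-- Hirzebruch–Jung continued fraction of a list of integers:
`hj [b₁,…,b_r] = b₁ - 1/(b₂ - 1/(⋯ - 1/b_r))`.
(Since `1/0 = 0` in `ℚ`, `hj [b] = b`.) -/
def hj : List ℤ → ℚ
  | [] => 0
  | b :: l => (b : ℚ) - 1 / hj l

/-- A nonempty sequence of integers, each `≥ 2`, is a T-chain datum if its
Hirzebruch–Jung continued fraction equals `d·n²/(d·n·a − 1)` for some integers
`d ≥ 1` and coprime `n > a ≥ 1`. -/
def IsTChainDatum (l : List ℤ) : Prop :=
  l ≠ [] ∧ (∀ b ∈ l, 2 ≤ b) ∧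
    ∃ d n a : ℤ, 1 ≤ d ∧ 1 ≤ a ∧ a < n ∧ Int.gcd n a = 1 ∧
      hj l = (d * n ^ 2 : ℚ) / (d * n * a - 1)


def hjSeed : List ℤ → ℚ → ℚ
  | [], x => x
  | b :: l, x => (b : ℚ) - 1 / hjSeed l x

lemma hj_append (l : List ℤ) (c : ℤ) : hj (l ++ [c]) = hjSeed l (c : ℚ) := by
  induction l with
  | nil => simp [hj, hjSeed]
  | cons b l ih => simp [hj, hjSeed, ih]

lemma keyB (l : List ℤ) (h2 : ∀ b ∈ l, 2 ≤ b) :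
    ∃ p p' q q' : ℤ, p * q' - p' * q = 1 ∧ 0 ≤ q ∧ q < p ∧ 1 ≤ q + q' ∧ q + q' ≤ p + p' ∧
      ∀ x : ℚ, 1 < x →
        0 < (q : ℚ) * x + q' ∧ hjSeed l x = ((p : ℚ) * x + p') / ((q : ℚ) * x + q') ∧
          1 < hjSeed l x := by
  induction l with
  | nil =>
    refine ⟨1, 0, 0, 1, by ring, le_refl _, by norm_num, by norm_num, by norm_num, ?_⟩
    intro x hx
    refine ⟨by norm_num, by simp [hjSeed], by simpa [hjSeed] using hx⟩
  | cons b l ih =>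
    obtain ⟨p, p', q, q', hdet, hq0, hqp, hqs, hps, hx⟩ :=
      ih (fun c hc => h2 c (List.mem_cons_of_mem _ hc))
    have hb : 2 ≤ b := h2 b List.mem_cons_self
    refine ⟨b * p - q, b * p' - q', p, p', by linear_combination hdet, by omega, ?_, ?_, ?_, ?_⟩
    · nlinarith
    · omega
    · nlinarith
    · intro x hx1
      obtain ⟨hden, heq, hval⟩ := hx x hx1
      have hnum : (q : ℚ) * x + q' < (p : ℚ) * x + p' := by
        have := hval
        rw [heq] at this
        calc (q : ℚ) * x + q' = 1 * ((q : ℚ) * x + q') := by ring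
        _ < ((p : ℚ) * x + p') / ((q : ℚ) * x + q') * ((q : ℚ) * x + q') := by
            exact mul_lt_mul_of_pos_right this hden
        _ = (p : ℚ) * x + p' := by rw [div_mul_cancel₀ _ (ne_of_gt hden)]
      have hnum0 : (0 : ℚ) < (p : ℚ) * x + p' := hden.trans hnum
      have hbq : (2 : ℚ) ≤ (b : ℚ) := by exact_mod_cast hb
      have heq2 : hjSeed (b :: l) x =
          (((b * p - q : ℤ) : ℚ) * x + ((b * p' - q' : ℤ) : ℚ)) / ((p : ℚ) * x + p') := by
        show (b : ℚ) - 1 / hjSeed l x = _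
        rw [heq, one_div_div]
        push_cast
        rw [eq_div_iff (ne_of_gt hnum0), sub_mul, div_mul_cancel₀ _ (ne_of_gt hnum0)]
        ring
      refine ⟨hnum0, heq2, ?_⟩
      rw [heq2, lt_div_iff₀ hnum0]
      push_cast
      nlinarith


set_option maxHeartbeats 1000000 in
/-- If `(b₁,…,b_r)` has all entries `≥ 2` and HJ continued fraction
`d·n²/(d·n·a − 1)` with `d ≥ 1`, coprime `n > a ≥ 1`, then with `m = 2n − a`
one has `m > n`, `gcd(m,n) = 1`, and `(2, b₁, …, b_{r−1}, b_r + 1)` has all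
entries `≥ 2` with HJ continued fraction `d·m²/(d·m·n − 1)`.  In particular
T-chain data are closed under `(b₁,…,b_r) ↦ (2, b₁, …, b_{r−1}, b_r + 1)`. -/
theorem stmt2 (l : List ℤ) (hne : l ≠ []) (h2 : ∀ b ∈ l, 2 ≤ b)
    (d n a : ℤ) (hd : 1 ≤ d) (ha : 1 ≤ a) (han : a < n) (hcop : Int.gcd n a = 1)
    (hhj : hj l = (d * n ^ 2 : ℚ) / (d * n * a - 1)) :
    n < 2 * n - a ∧ Int.gcd (2 * n - a) n = 1 ∧
    (∀ b ∈ (2 :: (l.dropLast ++ [l.getLast hne + 1])), 2 ≤ b) ∧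
    hj (2 :: (l.dropLast ++ [l.getLast hne + 1])) =
      (d * (2 * n - a) ^ 2 : ℚ) / (d * (2 * n - a) * n - 1) ∧
    IsTChainDatum (2 :: (l.dropLast ++ [l.getLast hne + 1])) := by
  have hmn : n < 2 * n - a := by omega
  have hn1 : 1 ≤ n := by omega
  have hcopNA : IsCoprime n a := Int.isCoprime_iff_gcd_eq_one.mpr hcop
  obtain ⟨u, v, huv⟩ := hcopNA
  have hcopMN : Int.gcd (2 * n - a) n = 1 := by
    rw [← Int.isCoprime_iff_gcd_eq_one]
    exact ⟨-v, u + 2 * v, by linear_combination huv⟩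
  obtain ⟨b, hbdef⟩ : ∃ b, b = l.getLast hne := ⟨_, rfl⟩
  have hbmem : b ∈ l := hbdef ▸ List.getLast_mem hne
  have hb2 : 2 ≤ b := h2 b hbmem
  have hF2 : ∀ c ∈ l.dropLast, 2 ≤ c := fun c hc => h2 c (List.dropLast_subset l hc)
  obtain ⟨p, p', q, q', hdet, hq0, hqp, hqs, hps, hX⟩ := keyB l.dropLast hF2
  have hlsplit : l.dropLast ++ [b] = l := hbdef ▸ List.dropLast_append_getLast hne
  have hb1 : (1 : ℚ) < ((b : ℤ) : ℚ) := by exact_mod_cast (by omega : (1:ℤ) < b)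
  obtain ⟨hD0, hEq, hV1⟩ := hX (b : ℚ) hb1
  obtain ⟨N, hNdef⟩ : ∃ N : ℤ, N = p * b + p' := ⟨_, rfl⟩
  obtain ⟨D, hDdef⟩ : ∃ D : ℤ, D = q * b + q' := ⟨_, rfl⟩
  have hDq : (0 : ℚ) < (D : ℚ) := by rw [hDdef]; push_cast; exact hD0
  have hDpos : 0 < D := by exact_mod_cast hDq
  have step1 : hj l = hjSeed l.dropLast (b : ℚ) := by
    conv_lhs => rw [← hlsplit]
    exact hj_append _ _
  have hjlND : hj l = (N : ℚ) / D := by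
    rw [step1, hEq, hNdef, hDdef]; push_cast; ring
  have hpDqN : p * D - q * N = 1 := by rw [hNdef, hDdef]; linear_combination hdet
  have hda : (1 : ℤ) ≤ d * a := by nlinarith
  have hdna : 0 < d * n * a - 1 := by nlinarith
  have hdnaQ : (0 : ℚ) < (d : ℚ) * n * a - 1 := by exact_mod_cast hdna
  have hcross : N * (d * n * a - 1) = d * n ^ 2 * D := by
    have h1 : (N : ℚ) / D = (d * n ^ 2 : ℚ) / (d * n * a - 1) := by rw [← hjlND, hhj]
    have h2' : (N : ℚ) * ((d : ℚ) * n * a - 1) = ((d : ℚ) * n ^ 2) * D := by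
      rw [div_eq_div_iff (ne_of_gt hDq) (ne_of_gt hdnaQ)] at h1
      push_cast at h1 ⊢; linarith
    exact_mod_cast h2'
  have hcopDN : IsCoprime D N := ⟨p, -q, by linarith [hpDqN]⟩
  have hcopDN2 : IsCoprime (d * n * a - 1) (d * n ^ 2) :=
    ⟨-(d * a * n + 1), d * a ^ 2, by ring⟩
  have hD_dvd : D ∣ d * n * a - 1 :=
    hcopDN.dvd_of_dvd_mul_left ⟨d * n ^ 2, by linear_combination hcross⟩
  have hdna_dvd : (d * n * a - 1) ∣ D :=
    hcopDN2.dvd_of_dvd_mul_left ⟨N, by linear_combination -hcross⟩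
  have hDeq : D = d * n * a - 1 := Int.dvd_antisymm hDpos.le hdna.le hD_dvd hdna_dvd
  have hNeq : N = d * n ^ 2 := by
    have h3 : N * (d * n * a - 1) = d * n ^ 2 * (d * n * a - 1) := by rw [hcross, hDeq]
    exact mul_right_cancel₀ (ne_of_gt hdna) h3
  obtain ⟨q0, hq0def⟩ : ∃ q0 : ℤ, q0 = d * a * (n - a) - 1 := ⟨_, rfl⟩
  obtain ⟨p0, hp0def⟩ : ∃ p0 : ℤ, p0 = d * n * (n - a) - 1 := ⟨_, rfl⟩
  have hpin0 : p0 * D - q0 * N = 1 := by rw [hDeq, hNeq, hp0def, hq0def]; ring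
  have hqlt : q < D := by
    have h4 : 0 ≤ q * (b - 2) := mul_nonneg hq0 (by omega)
    rw [hDdef]; nlinarith
  have hq00 : 0 ≤ q0 := by
    have h5 : 0 ≤ (d * a - 1) * (n - a - 1) := mul_nonneg (by linarith) (by omega)
    rw [hq0def]; nlinarith
  have hq0lt : q0 < D := by
    have h6 : 0 < d * a * a := mul_pos (mul_pos (by linarith) (by linarith)) (by linarith)
    rw [hq0def, hDeq]; linarith
  have hdvdq : D ∣ (q - q0) :=
    hcopDN.dvd_of_dvd_mul_left ⟨p - p0, by linear_combination hpin0 - hpDqN⟩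
  have hqq0 : q = q0 := by
    obtain ⟨k, hk⟩ := hdvdq
    have hk1 : k < 1 := lt_of_mul_lt_mul_left (by linarith : D * k < D * 1) hDpos.le
    have hk2 : (-1 : ℤ) < k := lt_of_mul_lt_mul_left (by linarith : D * (-1) < D * k) hDpos.le
    have hk0 : k = 0 := by omega
    rw [hk0, mul_zero] at hk
    linarith
  have hpp0 : p = p0 := by
    have h7 : p * D = p0 * D := by rw [hqq0] at hpDqN; linarith
    exact mul_right_cancel₀ (ne_of_gt hDpos) h7
  have hbb1 : (1 : ℚ) < ((b + 1 : ℤ) : ℚ) := by exact_mod_cast (by omega : (1:ℤ) < b + 1)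
  obtain ⟨hD0', hEq', hV1'⟩ := hX ((b + 1 : ℤ) : ℚ) hbb1
  obtain ⟨N₂, hN2def⟩ : ∃ x : ℤ, x = N + p := ⟨_, rfl⟩
  obtain ⟨D₂, hD2def⟩ : ∃ x : ℤ, x = D + q := ⟨_, rfl⟩
  have hD2Q : (0 : ℚ) < (D₂ : ℚ) := by
    rw [hD2def, hDdef]; push_cast at hD0' ⊢; linarith
  have hseedval : hjSeed l.dropLast ((b + 1 : ℤ) : ℚ) = (N₂ : ℚ) / D₂ := by
    rw [hEq', hN2def, hD2def, hNdef, hDdef]; push_cast; ring_nf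
  have hV1'' : (1 : ℚ) < (N₂ : ℚ) / D₂ := by rw [← hseedval]; exact hV1'
  have hN2Q : (0 : ℚ) < (N₂ : ℚ) := by
    have := (one_lt_div hD2Q).mp hV1''
    linarith
  have hN2ne : (N₂ : ℚ) ≠ 0 := ne_of_gt hN2Q
  have hN2eq : N₂ = d * (2 * n - a) * n - 1 := by
    rw [hN2def, hNeq, hpp0, hp0def]; ring
  have hnum2 : 2 * N₂ - D₂ = d * (2 * n - a) ^ 2 := by
    rw [hN2def, hD2def, hNeq, hpp0, hp0def, hDeq, hqq0, hq0def]; ring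
  have hjnew : hj (2 :: (l.dropLast ++ [l.getLast hne + 1])) =
      (d * (2 * n - a) ^ 2 : ℚ) / (d * (2 * n - a) * n - 1) := by
    rw [← hbdef]
    have h1 : hj (2 :: (l.dropLast ++ [b + 1])) = 2 - 1 / ((N₂ : ℚ) / D₂) := by
      simp only [hj, hj_append]
      rw [hseedval]
      norm_num
    rw [h1, one_div_div]
    have h2' : (2 : ℚ) - (D₂ : ℚ) / N₂ = ((2 * N₂ - D₂ : ℤ) : ℚ) / ((N₂ : ℤ) : ℚ) := by
      push_cast
      field_simp
    rw [h2', hnum2, hN2eq]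
    push_cast
    ring_nf
  have hmem : ∀ c ∈ (2 :: (l.dropLast ++ [l.getLast hne + 1])), 2 ≤ c := by
    intro c hc
    rcases List.mem_cons.mp hc with h | h
    · omega
    · rcases List.mem_append.mp h with h | h
      · exact hF2 c h
      · have hcb : c = l.getLast hne + 1 := by simpa using h
        rw [hcb, ← hbdef]; omega
  have hjnew' : hj (2 :: (l.dropLast ++ [l.getLast hne + 1])) =
      ((d : ℚ) * ((2 * n - a : ℤ) : ℚ) ^ 2) / ((d : ℚ) * ((2 * n - a : ℤ) : ℚ) * n - 1) := by
    rw [hjnew]; push_cast; ring_nf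
  exact ⟨hmn, hcopMN, hmem, hjnew, List.cons_ne_nil _ _, hmem,
    d, 2 * n - a, n, hd, hn1, hmn, hcopMN, hjnew'⟩
end

section
/- Let (b_1,…,b_r) be a sequence of integers with every b_i ≥ 2 whose Hirzebruch–Jung continued fraction equals d·n²/(d·n·a − 1) for integers d ≥ 1 and coprime n > a ≥ 1. Set m = n + a. Then m > a, gcd(m, a) = 1, and the sequence (b_1 + 1, b_2, …, b_r, 2) has every term ≥ 2 and Hirzebruch–Jung continued fraction equal to d·m²/(d·m·a − 1). In particular, the set of T-chain data is closed under the operation (b_1,…,b_r) ↦ (b_1 + 1, b_2, …, b_r, 2). -/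
lemma hj_cons (b : ℤ) (l : List ℤ) : hj (b :: l) = (b:ℚ) - 1 / hj l := rfl

lemma hj_inv : ∀ t : List ℤ, t ≠ [] → (∀ x ∈ t, 2 ≤ x) →
    ∃ p q A B : ℤ, 1 ≤ q ∧ q < p ∧ 1 ≤ B ∧ B ≤ A ∧ B ≤ q ∧ B * p - A * q = 1 ∧
      hj t = (p : ℚ) / q ∧ hj (t ++ [2]) = ((p : ℚ) + A) / ((q : ℚ) + B) := by
  intro t
  induction t with
  | nil => intro h; exact absurd rfl h
  | cons c t' ih =>
    intro _ h2
    have hc : 2 ≤ c := h2 c (List.mem_cons_self)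
    rcases eq_or_ne t' [] with rfl | hne
    · refine ⟨c, 1, c - 1, 1, le_refl 1, by omega, le_refl 1, by omega, le_refl 1, by ring, ?_, ?_⟩
      · norm_num [hj]
      · norm_num [hj]
        ring
    · obtain ⟨p', q', A', B', hq'1, hq'p, hB'1, hB'A, hB'q, hrel, hu, hv⟩ :=
        ih hne (fun x hx => h2 x (List.mem_cons_of_mem _ hx))
      have hA'p : A' < p' := by nlinarith
      have hp'0 : (0:ℤ) < p' := by omega
      refine ⟨c * p' - q', p', c * A' - B', A', by omega, ?_, by omega, ?_, by omega,
        by linear_combination hrel, ?_, ?_⟩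
      · nlinarith [mul_nonneg (by omega : (0:ℤ) ≤ c - 2) (by omega : (0:ℤ) ≤ p')]
      · nlinarith [mul_nonneg (by omega : (0:ℤ) ≤ c - 2) (by omega : (0:ℤ) ≤ A')]
      · have hp'Q : ((p':ℚ)) ≠ 0 := by exact_mod_cast hp'0.ne'
        rw [hj_cons, hu, one_div_div]
        push_cast
        field_simp
      · have h1 : (0:ℤ) < p' + A' := by omega
        have h2 : (0:ℤ) < q' + B' := by omega
        have h1Q : ((p':ℚ) + A') ≠ 0 := by exact_mod_cast h1.ne'
        have h2Q : ((q':ℚ) + B') ≠ 0 := by exact_mod_cast h2.ne'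
        rw [List.cons_append, hj_cons, hv, one_div_div]
        push_cast
        field_simp
        ring

set_option maxHeartbeats 1600000 in
/-- If `(b₁,…,b_r)` has all entries `≥ 2` and HJ continued fraction
`d·n²/(d·n·a − 1)` with `d ≥ 1`, coprime `n > a ≥ 1`, then with `m = n + a`
one has `m > a`, `gcd(m,a) = 1`, and `(b₁ + 1, b₂, …, b_r, 2)` has all entries
`≥ 2` with HJ continued fraction `d·m²/(d·m·a − 1)`.  In particular T-chain
data are closed under `(b₁,…,b_r) ↦ (b₁ + 1, b₂, …, b_r, 2)`. -/
theorem stmt3 (b : ℤ) (t : List ℤ) (h2 : ∀ x ∈ b :: t, 2 ≤ x)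
    (d n a : ℤ) (hd : 1 ≤ d) (ha : 1 ≤ a) (han : a < n) (hcop : Int.gcd n a = 1)
    (hhj : hj (b :: t) = (d * n ^ 2 : ℚ) / (d * n * a - 1)) :
    a < n + a ∧ Int.gcd (n + a) a = 1 ∧
    (∀ x ∈ ((b + 1) :: (t ++ [2])), 2 ≤ x) ∧
    hj ((b + 1) :: (t ++ [2])) =
      (d * (n + a) ^ 2 : ℚ) / (d * (n + a) * a - 1) ∧
    IsTChainDatum ((b + 1) :: (t ++ [2])) := by
  have hb : 2 ≤ b := h2 b (List.mem_cons_self)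
  have hn2 : 2 ≤ n := by omega
  have hX : (0:ℤ) < d * n * a - 1 := by
    have h1 : 2 ≤ n * a := by nlinarith
    have h3 : n * a ≤ d * (n * a) :=
      le_mul_of_one_le_left (by nlinarith) hd
    have he : d * n * a = d * (n * a) := by ring
    linarith
  have copX : IsCoprime (d * n * a - 1) (d * n ^ 2) := by
    have h1 : IsCoprime (d * n * a - 1) (d * n * a) := ⟨-1, 1, by ring⟩
    have hd' : IsCoprime (d * n * a - 1) d := h1.of_mul_right_left.of_mul_right_left
    have hn' : IsCoprime (d * n * a - 1) n := h1.of_mul_right_left.of_mul_right_right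
    have h3 : IsCoprime (d * n * a - 1) (d * (n * n)) := hd'.mul_right (hn'.mul_right hn')
    have he : d * n ^ 2 = d * (n * n) := by ring
    rwa [he]
  have copna : Int.gcd (n + a) a = 1 := by
    rw [← Int.isCoprime_iff_gcd_eq_one] at hcop ⊢
    obtain ⟨u, v, huv⟩ := hcop
    exact ⟨u, v - u, by linear_combination huv⟩
  have hmem : ∀ x ∈ ((b + 1) :: (t ++ [2])), 2 ≤ x := by
    intro x hx
    rcases List.mem_cons.mp hx with rfl | hx
    · omega
    · rcases List.mem_append.mp hx with hx | hx
      · exact h2 x (List.mem_cons_of_mem _ hx)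
      · simp at hx; omega
  have hXQ : ((d:ℚ) * n * a - 1) ≠ 0 := by
    have h0 : ((d * n * a - 1 : ℤ) : ℚ) ≠ 0 := by exact_mod_cast hX.ne'
    push_cast at h0
    intro hcon; exact h0 (by linear_combination hcon)
  have hmain : hj ((b + 1) :: (t ++ [2])) =
      (d * (n + a) ^ 2 : ℚ) / (d * (n + a) * a - 1) := by
    rcases eq_or_ne t [] with rfl | hne
    · -- t = [] : then b = d*n^2, d*n*a = 2, so d = 1, a = 1, n = 2, b = 4
      have hb' : (b : ℚ) = (d * n ^ 2 : ℚ) / (d * n * a - 1) := by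
        simpa [hj] using hhj
      have key : b * (d * n * a - 1) = d * n ^ 2 := by
        have hq' : (b : ℚ) * ((d:ℚ) * n * a - 1) = (d:ℚ) * n ^ 2 := by
          rw [hb', div_mul_cancel₀ _ hXQ]
        exact_mod_cast hq'
      have hdvd : (d * n * a - 1) ∣ d * n ^ 2 := ⟨b, by linear_combination -key⟩
      obtain ⟨u, v, huv⟩ := copX
      have hone : (d * n * a - 1) ∣ 1 := by
        have h' : (d * n * a - 1) ∣ u * (d * n * a - 1) + v * (d * n ^ 2) :=
          dvd_add (dvd_mul_left _ _) (hdvd.mul_left v)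
        rwa [huv] at h'
      have hX1 : d * n * a - 1 = 1 := by
        have h1 := Int.le_of_dvd one_pos hone
        linarith
      have hdna : d * n * a = 2 := by linarith
      have ha1 : a = 1 := by
        by_contra h
        have ha2 : 2 ≤ a := by omega
        have hn3 : 3 ≤ n := by omega
        have h6 : 6 ≤ n * a := by nlinarith
        have h7 : n * a ≤ d * (n * a) := le_mul_of_one_le_left (by nlinarith) hd
        have he : d * n * a = d * (n * a) := by ring
        linarith
      have hd1 : d = 1 := by
        by_contra h
        have hd2 : 2 ≤ d := by omega
        have h4 : 4 ≤ d * n := by nlinarith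
        have he : d * n * a = d * n := by rw [ha1]; ring
        linarith
      have hn' : n = 2 := by rw [ha1, hd1] at hdna; linarith
      have hb4 : b = 4 := by rw [ha1, hd1, hn'] at key; norm_num at key; omega
      subst ha1 hd1 hn' hb4
      norm_num [hj]
    · obtain ⟨p, q, A, B, hq1, hqp, hB1, hBA, hBq, hrel, hu, hv⟩ :=
        hj_inv t hne (fun x hx => h2 x (List.mem_cons_of_mem _ hx))
      have hp0 : (0:ℤ) < p := by omega
      have hpQ : (p : ℚ) ≠ 0 := by exact_mod_cast hp0.ne'
      -- the key integer identity
      have key : (b * p - q) * (d * n * a - 1) = d * n ^ 2 * p := by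
        have h := hhj
        rw [hj_cons, hu, one_div_div] at h
        have h2' : ((b:ℚ) * p - q) * ((d:ℚ) * n * a - 1) = (d:ℚ) * n ^ 2 * p := by
          field_simp at h
          linear_combination h
        exact_mod_cast h2'
      have copP : IsCoprime p (b * p - q) := ⟨B - A * b, A, by linear_combination hrel⟩
      have hdv1 : (d * n * a - 1) ∣ p := by
        have hdvd : (d * n * a - 1) ∣ d * n ^ 2 * p := ⟨b * p - q, by linear_combination -key⟩
        exact copX.dvd_of_dvd_mul_left hdvd
      have hdv2 : p ∣ (d * n * a - 1) := by
        have hdvd : p ∣ (b * p - q) * (d * n * a - 1) := ⟨d * n ^ 2, by linear_combination key⟩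
        exact copP.dvd_of_dvd_mul_left hdvd
      have hpX : p = d * n * a - 1 := Int.dvd_antisymm hp0.le hX.le hdv2 hdv1
      subst hpX
      have hq2 : q = b * (d * n * a - 1) - d * n ^ 2 := by
        have hc : (b * (d * n * a - 1) - q) * (d * n * a - 1) =
            (d * n ^ 2) * (d * n * a - 1) := by linear_combination key
        have := mul_right_cancel₀ hX.ne' hc
        linarith
      have hp2 : 2 ≤ d * n * a - 1 := by linarith
      -- bounds for the candidate A₀ = d*a²
      have hA0pos : 1 ≤ d * a ^ 2 := by
        have : (0:ℤ) < d * a ^ 2 := mul_pos (by omega) (pow_pos (by omega) 2)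
        exact this
      have hA0lt : d * a ^ 2 < d * n * a - 1 := by
        have hk1 : (0:ℤ) < d * a * (n - a) :=
          mul_pos (mul_pos (by omega) (by omega)) (by omega)
        have hk1' : (1:ℤ) ≤ d * a * (n - a) := hk1
        have hk2 : d * a * (n - a) ≠ 1 := by
          intro h
          have hda0 : (0:ℤ) < d * a := mul_pos (by omega) (by omega)
          have hda1 : d * a = 1 := by
            have hle : d * a * 1 ≤ d * a * (n - a) :=
              mul_le_mul_of_nonneg_left (by omega) hda0.le
            have : (1:ℤ) ≤ d * a := hda0
            nlinarith
          have hna1 : n - a = 1 := by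
            rw [hda1, one_mul] at h; exact h
          have had : a ≤ d * a := le_mul_of_one_le_left (by omega) hd
          have ha1 : a = 1 := by linarith
          have hd1 : d = 1 := by rw [ha1] at hda1; linarith
          have hn' : n = 2 := by omega
          rw [ha1, hd1, hn'] at hp2; norm_num at hp2
        have hk3 : (2:ℤ) ≤ d * a * (n - a) :=
          Int.add_one_le_iff.mpr (lt_of_le_of_ne hk1' (Ne.symm hk2))
        have he : d * n * a = d * a * (n - a) + d * a ^ 2 := by ring
        linarith
      have hAlt : A < d * n * a - 1 := by
        have h1 : B * (d * n * a - 1) ≤ q * (d * n * a - 1) :=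
          mul_le_mul_of_nonneg_right hBq (by linarith)
        have h2' : A * q < (d * n * a - 1) * q := by nlinarith
        exact lt_of_mul_lt_mul_right h2' (by omega)
      have hA1 : 1 ≤ A := by omega
      have copPQ : IsCoprime (d * n * a - 1) q := ⟨B, -A, by linear_combination hrel⟩
      have hrel0 : (b * (d * a ^ 2) - (d * n * a - 1) - 2) * (d * n * a - 1)
          - (d * a ^ 2) * q = 1 := by
        rw [hq2]; ring
      have hAA : A = d * a ^ 2 := by
        have hdvd : (d * n * a - 1) ∣ (A - d * a ^ 2) * q :=
          ⟨B - (b * (d * a ^ 2) - (d * n * a - 1) - 2), by linear_combination hrel0 - hrel⟩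
        obtain ⟨k, hk⟩ := copPQ.dvd_of_dvd_mul_right hdvd
        have hlow : (d * n * a - 1) * (-1) < (d * n * a - 1) * k := by
          rw [← hk]; linarith
        have hhigh : (d * n * a - 1) * k < (d * n * a - 1) * 1 := by
          rw [← hk]; linarith
        have hk1 := lt_of_mul_lt_mul_left hlow (by linarith : (0:ℤ) ≤ d * n * a - 1)
        have hk2 := lt_of_mul_lt_mul_left hhigh (by linarith : (0:ℤ) ≤ d * n * a - 1)
        have hk0 : k = 0 := by omega
        rw [hk0, mul_zero] at hk
        linarith
      have hBB : B = b * (d * a ^ 2) - (d * n * a - 1) - 2 := by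
        have hz : (B - (b * (d * a ^ 2) - (d * n * a - 1) - 2)) * (d * n * a - 1) = 0 := by
          rw [hAA] at hrel
          linear_combination hrel - hrel0
        rcases mul_eq_zero.mp hz with h | h
        · linarith
        · linarith
      -- final computation
      have hpA : ((d:ℚ) * n * a - 1) + (d:ℚ) * a ^ 2 ≠ 0 := by
        have h0 : (0:ℤ) < (d * n * a - 1) + d * a ^ 2 := by linarith
        have h1 : (((d * n * a - 1) + d * a ^ 2 : ℤ) : ℚ) ≠ 0 := by exact_mod_cast h0.ne'
        push_cast at h1
        intro hcon; exact h1 (by linear_combination hcon)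
      have hden : ((d:ℚ) * ((n:ℚ) + (a:ℚ)) * a - 1) ≠ 0 := by
        intro hcon; exact hpA (by linear_combination hcon)
      have hvQ : hj (t ++ [2]) =
          (((d:ℚ) * n * a - 1) + (d:ℚ) * a ^ 2) /
            ((((b:ℚ) * ((d:ℚ) * n * a - 1) - (d:ℚ) * n ^ 2)) +
              ((b:ℚ) * ((d:ℚ) * a ^ 2) - ((d:ℚ) * n * a - 1) - 2)) := by
        rw [hv, hAA, hBB, hq2]
        push_cast
        ring
      have hsplit : ∀ x num den : ℚ, den ≠ 0 → x - num / den = (x * den - num) / den := by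
        intro x num den hden0
        field_simp
      rw [hj_cons, hvQ, one_div_div]
      push_cast
      rw [hsplit _ _ _ hpA, div_eq_div_iff hpA hden]
      ring
  exact ⟨by omega, copna, hmem, hmain, by simp, hmem, d, n + a, a, hd, ha, by omega, copna, by push_cast; exact hmain⟩
end

section
/- A finite sequence of integers each ≥ 2 is a T-chain datum if and only if it belongs to the inductively generated family G. (This is the numerical content of the Kollár–Shepherd-Barron description: every singularity of class T that is not a rational double point is obtained from the singularities with resolution chains (4) and (3,2,…,2,3) by iterating the two augmentation operations.) -/
/-- The operation `(b₁,…,b_r) ↦ (2, b₁, …, b_{r−1}, b_r + 1)`. -/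
def opLeft (l : List ℤ) : List ℤ := 2 :: (l.dropLast ++ [l.getLastD 0 + 1])

/-- The operation `(b₁,…,b_r) ↦ (b₁ + 1, b₂, …, b_r, 2)`. -/
def opRight (l : List ℤ) : List ℤ := (l.headI + 1) :: (l.tail ++ [2])

/-- The inductively generated family `G`: it contains `(4)`, all chains
`(3, 2, …, 2, 3)` (with `k ≥ 0` twos), and is closed under the two
augmentation operations. -/
inductive G : List ℤ → Prop
  | four : G [4]
  | chain (k : ℕ) : G (3 :: (List.replicate k 2 ++ [3]))
  | left {l : List ℤ} : G l → G (opLeft l)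
  | right {l : List ℤ} : G l → G (opRight l)

/-! ### Auxiliary 2×2 integer matrix machinery -/

/-- `Pm l` is the matrix `M(b₁)⋯M(b_r)` (as a 4-tuple `(p, p', q, q')` for
`[[p, p'],[q, q']]`) where `M(b) = [[b, -1],[1, 0]]`. -/
def Pm : List ℤ → ℤ × ℤ × ℤ × ℤ
  | [] => (1, 0, 0, 1)
  | x :: l => (x * (Pm l).1 - (Pm l).2.2.1, x * (Pm l).2.1 - (Pm l).2.2.2, (Pm l).1, (Pm l).2.1)

/-- 2×2 matrix multiplication on 4-tuples. -/
def mm (A B : ℤ × ℤ × ℤ × ℤ) : ℤ × ℤ × ℤ × ℤ :=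
  (A.1*B.1 + A.2.1*B.2.2.1, A.1*B.2.1 + A.2.1*B.2.2.2,
   A.2.2.1*B.1 + A.2.2.2*B.2.2.1, A.2.2.1*B.2.1 + A.2.2.2*B.2.2.2)

def Mx (x : ℤ) : ℤ × ℤ × ℤ × ℤ := (x, -1, 1, 0)

/-- The matrix of the T-chain with parameters `(d, n, a)`. -/
def Tm (d n a : ℤ) : ℤ × ℤ × ℤ × ℤ := (d*n^2, -(d*n*(n-a)-1), d*n*a-1, -(d*a*(n-a)-1))

lemma mm_assoc (A B C : ℤ × ℤ × ℤ × ℤ) : mm (mm A B) C = mm A (mm B C) := by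
  simp only [mm, Prod.mk.injEq]
  refine ⟨by ring, by ring, by ring, by ring⟩

lemma Pm_cons (x : ℤ) (l : List ℤ) : Pm (x :: l) = mm (Mx x) (Pm l) := by
  simp only [Pm, mm, Mx, Prod.mk.injEq]
  refine ⟨by ring, by ring, by ring, by ring⟩

lemma Pm_concat (l : List ℤ) (x : ℤ) : Pm (l ++ [x]) = mm (Pm l) (Mx x) := by
  induction l with
  | nil =>
      simp only [List.nil_append, Pm, mm, Mx, Prod.mk.injEq]
      refine ⟨by ring, by ring, by ring, by ring⟩
  | cons y l ih => rw [List.cons_append, Pm_cons, ih, Pm_cons, mm_assoc]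

lemma Mx_succ (x : ℤ) : Mx (x + 1) = mm (Mx x) (1, 0, -1, 1) := by
  simp only [Mx, mm, Prod.mk.injEq]; refine ⟨by ring, by ring, by ring, by ring⟩

lemma Mx_succ' (x : ℤ) : Mx (x + 1) = mm (1, 1, 0, 1) (Mx x) := by
  simp only [Mx, mm, Prod.mk.injEq]; refine ⟨by ring, by ring, by ring, by ring⟩

lemma left_eq (d n a : ℤ) : mm (mm (Mx 2) (Tm d n a)) (1, 0, -1, 1) = Tm d (2*n-a) n := by
  simp only [Mx, Tm, mm, Prod.mk.injEq]
  refine ⟨by ring, by ring, by ring, by ring⟩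

lemma right_eq (d n a : ℤ) : mm (mm (1, 1, 0, 1) (Tm d n a)) (Mx 2) = Tm d (n+a) a := by
  simp only [Mx, Tm, mm, Prod.mk.injEq]
  refine ⟨by ring, by ring, by ring, by ring⟩

lemma cancel_left {X Y : ℤ × ℤ × ℤ × ℤ}
    (h : mm (mm (Mx 2) X) (1, 0, -1, 1) = mm (mm (Mx 2) Y) (1, 0, -1, 1)) : X = Y := by
  obtain ⟨a, b, c, d⟩ := X; obtain ⟨a', b', c', d'⟩ := Y
  simp only [Mx, mm, Prod.mk.injEq] at h ⊢
  omega

lemma cancel_right {X Y : ℤ × ℤ × ℤ × ℤ}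
    (h : mm (mm (1, 1, 0, 1) X) (Mx 2) = mm (mm (1, 1, 0, 1) Y) (Mx 2)) : X = Y := by
  obtain ⟨a, b, c, d⟩ := X; obtain ⟨a', b', c', d'⟩ := Y
  simp only [Mx, mm, Prod.mk.injEq] at h ⊢
  omega

lemma Pfacts : ∀ (l : List ℤ), l ≠ [] → (∀ b ∈ l, 2 ≤ b) →
    ∀ p p' q q', Pm l = (p, p', q, q') →
      1 ≤ q ∧ q < p ∧ q' ≤ 0 ∧ p' < q' ∧ 0 < q + q' ∧ q' - p' ≤ p - q ∧ p * q' - p' * q = 1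
  | [], h, _ => absurd rfl h
  | [b], _, h2 => by
      intro p p' q q' hP
      simp only [Pm, Prod.mk.injEq] at hP
      have hb : 2 ≤ b := h2 b (by simp)
      obtain ⟨h1, h2', h3, h4⟩ := hP
      subst h1 h2' h3 h4
      norm_num
      omega
  | b :: c :: t, _, h2 => by
      intro p p' q q' hP
      rcases hu : Pm (c :: t) with ⟨u, u', v, v'⟩
      have IH := Pfacts (c :: t) (by simp) (fun x hx => h2 x (List.mem_cons_of_mem _ hx)) u u' v v' hu
      have hb : 2 ≤ b := h2 b (by simp)
      have hP' : Pm (b :: c :: t) = (b * u - v, b * u' - v', u, u') := by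
        show (b * (Pm (c::t)).1 - (Pm (c::t)).2.2.1, b * (Pm (c::t)).2.1 - (Pm (c::t)).2.2.2,
          (Pm (c::t)).1, (Pm (c::t)).2.1) = _
        rw [hu]
      rw [hP'] at hP
      simp only [Prod.mk.injEq] at hP
      obtain ⟨h1, h2', h3, h4⟩ := hP
      obtain ⟨i1, i2, i3, i4, i5, i6, i7⟩ := IH
      subst h1 h2' h3 h4
      refine ⟨by nlinarith, by nlinarith, by nlinarith, by nlinarith, by nlinarith,
        by nlinarith, by nlinarith⟩

lemma hj_eq : ∀ (l : List ℤ), l ≠ [] → (∀ b ∈ l, 2 ≤ b) →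
    hj l = ((Pm l).1 : ℚ) / ((Pm l).2.2.1 : ℚ)
  | [], h, _ => absurd rfl h
  | [b], _, _ => by
      show (b : ℚ) - 1 / hj [] = _
      show (b : ℚ) - 1 / 0 = ((b * 1 - 0 : ℤ) : ℚ) / ((1 : ℤ) : ℚ)
      norm_num
  | b :: c :: t, _, h2 => by
      rcases hu : Pm (c :: t) with ⟨u, u', v, v'⟩
      obtain ⟨i1, i2, _⟩ := Pfacts (c :: t) (by simp)
        (fun x hx => h2 x (List.mem_cons_of_mem _ hx)) u u' v v' hu
      have ih := hj_eq (c :: t) (by simp) (fun x hx => h2 x (List.mem_cons_of_mem _ hx))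
      rw [hu] at ih
      have hP' : Pm (b :: c :: t) = (b * u - v, b * u' - v', u, u') := by
        show (b * (Pm (c::t)).1 - (Pm (c::t)).2.2.1, b * (Pm (c::t)).2.1 - (Pm (c::t)).2.2.2,
          (Pm (c::t)).1, (Pm (c::t)).2.1) = _
        rw [hu]
      rw [hP']
      show (b : ℚ) - 1 / hj (c :: t) = _
      rw [ih]
      have hu0 : (u : ℚ) ≠ 0 := by exact_mod_cast (show u ≠ 0 by omega)
      have hv0 : (v : ℚ) ≠ 0 := by exact_mod_cast (show v ≠ 0 by omega)
      rw [one_div_div]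
      push_cast
      field_simp

lemma Pm_cons_fst (x : ℤ) (l : List ℤ) :
    (Pm (x :: l)).1 = x * (Pm l).1 - (Pm l).2.2.1 := rfl
lemma Pm_cons_q (x : ℤ) (l : List ℤ) :
    (Pm (x :: l)).2.2.1 = (Pm l).1 := rfl

lemma uniq : ∀ (l₁ l₂ : List ℤ), l₁ ≠ [] → l₂ ≠ [] → (∀ b ∈ l₁, 2 ≤ b) → (∀ b ∈ l₂, 2 ≤ b) →
    (Pm l₁).1 = (Pm l₂).1 → (Pm l₁).2.2.1 = (Pm l₂).2.2.1 → l₁ = l₂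
  | [], _, h, _, _, _ => absurd rfl h
  | _ :: _, [], _, h, _, _ => absurd rfl h
  | b :: t₁, c :: t₂, _, _, e1, e2 => by
      intro hp hq
      rcases h1 : Pm t₁ with ⟨u₁, u₁', v₁, v₁'⟩
      rcases h2 : Pm t₂ with ⟨u₂, u₂', v₂, v₂'⟩
      rw [Pm_cons_fst, Pm_cons_fst, h1, h2] at hp
      rw [Pm_cons_q, Pm_cons_q, h1, h2] at hq
      simp only at hp hq
      match t₁, t₂, h1, h2 with
      | [], [], h1, h2 =>
          simp only [Pm, Prod.mk.injEq] at h1 h2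
          obtain ⟨ha1, -, ha2, -⟩ := h1
          obtain ⟨hb1, -, hb2, -⟩ := h2
          subst ha1 ha2 hb1 hb2
          congr 1
          omega
      | [], c' :: t₂, h1, h2 =>
          obtain ⟨i1, i2, _⟩ := Pfacts (c' :: t₂) (by simp)
            (fun x hx => e2 x (List.mem_cons_of_mem _ hx)) _ _ _ _ h2
          simp only [Pm, Prod.mk.injEq] at h1
          omega
      | b' :: t₁, [], h1, h2 =>
          obtain ⟨i1, i2, _⟩ := Pfacts (b' :: t₁) (by simp)
            (fun x hx => e1 x (List.mem_cons_of_mem _ hx)) _ _ _ _ h1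
          simp only [Pm, Prod.mk.injEq] at h2
          omega
      | b' :: t₁, c' :: t₂, h1, h2 =>
          obtain ⟨i1, i2, _⟩ := Pfacts (b' :: t₁) (by simp)
            (fun x hx => e1 x (List.mem_cons_of_mem _ hx)) _ _ _ _ h1
          obtain ⟨j1, j2, _⟩ := Pfacts (c' :: t₂) (by simp)
            (fun x hx => e2 x (List.mem_cons_of_mem _ hx)) _ _ _ _ h2
          subst hq
          have hbc : b = c := by
            by_contra hne
            rcases lt_or_gt_of_ne hne with h | h
            · have key : (c - b) * u₁ = v₂ - v₁ := by linear_combination -hp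
              nlinarith [mul_le_mul_of_nonneg_right (by omega : (1:ℤ) ≤ c - b)
                (by omega : (0:ℤ) ≤ u₁)]
            · have key : (b - c) * u₁ = v₁ - v₂ := by linear_combination hp
              nlinarith [mul_le_mul_of_nonneg_right (by omega : (1:ℤ) ≤ b - c)
                (by omega : (0:ℤ) ≤ u₁)]
          subst hbc
          have hv : v₁ = v₂ := by linarith
          have := uniq (b' :: t₁) (c' :: t₂) (by simp) (by simp)
            (fun x hx => e1 x (List.mem_cons_of_mem _ hx))
            (fun x hx => e2 x (List.mem_cons_of_mem _ hx))
            (by rw [h1, h2])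
            (by rw [h1, h2]; simpa using hv)
          rw [this]

lemma concat_of_ne_nil {l : List ℤ} (h : l ≠ []) : ∃ t g, l = t ++ [g] := by
  rcases List.eq_nil_or_concat l with h' | ⟨t, g, h'⟩
  · exact absurd h' h
  · exact ⟨t, g, by simpa using h'⟩

lemma G_facts {l : List ℤ} (h : G l) : l ≠ [] ∧ ∀ b ∈ l, 2 ≤ b := by
  induction h with
  | four => exact ⟨by simp, by intro b hb; simp at hb; omega⟩
  | chain k =>
      refine ⟨by simp, ?_⟩
      intro b hb
      simp [List.mem_append] at hb
      rcases hb with rfl | hb | rfl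
      · norm_num
      · omega
      · norm_num
  | @left m hG ih =>
      obtain ⟨hne, hge⟩ := ih
      obtain ⟨t, g, rfl⟩ := concat_of_ne_nil hne
      have hg : 2 ≤ g := hge g (by simp)
      refine ⟨by simp [opLeft], ?_⟩
      intro b hb
      simp [opLeft, List.dropLast_concat, List.getLastD_concat] at hb
      rcases hb with rfl | hb | rfl
      · norm_num
      · exact hge b (by simp [hb])
      · omega
  | @right m hG ih =>
      obtain ⟨hne, hge⟩ := ih
      obtain ⟨c, t, rfl⟩ := List.exists_cons_of_ne_nil hne
      have hc : 2 ≤ c := hge c (by simp)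
      refine ⟨by simp [opRight], ?_⟩
      intro b hb
      simp [opRight] at hb
      rcases hb with rfl | hb | rfl
      · omega
      · exact hge b (by simp [hb])
      · norm_num

/-- The matrix of the chain `(2,…,2,3)` with `k` twos. -/
lemma chain_Pm (k : ℕ) :
    Pm (List.replicate k 2 ++ [3]) = (2*(k:ℤ)+3, -((k:ℤ)+1), 2*(k:ℤ)+1, -(k:ℤ)) := by
  induction k with
  | zero => simp only [List.replicate, List.nil_append]; norm_num [Pm]
  | succ k ih =>
      rw [List.replicate_succ, List.cons_append, Pm_cons, ih]
      simp only [Mx, mm, Prod.mk.injEq]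
      push_cast
      refine ⟨by ring, by ring, by ring, by ring⟩

lemma chain_ge (k : ℕ) : ∀ b ∈ (3 :: (List.replicate k 2 ++ [3]) : List ℤ), 2 ≤ b := by
  intro b hb
  simp [List.mem_append] at hb
  rcases hb with rfl | hb | rfl
  · norm_num
  · omega
  · norm_num

lemma chain_Pm3 (k : ℕ) :
    Pm (3 :: (List.replicate k 2 ++ [3])) = Tm ((k:ℤ) + 2) 2 1 := by
  rw [Pm_cons, chain_Pm]
  simp only [Mx, Tm, mm, Prod.mk.injEq]
  refine ⟨by ring, by ring, by ring, by ring⟩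

lemma G_matrix {l : List ℤ} (h : G l) :
    ∃ d n a : ℤ, 1 ≤ d ∧ 1 ≤ a ∧ a < n ∧ IsCoprime n a ∧ Pm l = Tm d n a := by
  induction h with
  | four =>
      exact ⟨1, 2, 1, le_refl _, le_refl _, by norm_num,
        ⟨1, -1, by ring⟩, by norm_num [Pm, Tm]⟩
  | chain k =>
      exact ⟨(k:ℤ) + 2, 2, 1, by omega, le_refl _, by norm_num, ⟨1, -1, by ring⟩, chain_Pm3 k⟩
  | @left m hG ih =>
      obtain ⟨d, n, a, hd, ha, han, ⟨x, y, hxy⟩, hPm⟩ := ih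
      obtain ⟨hne, hge⟩ := G_facts hG
      obtain ⟨t, g, rfl⟩ := concat_of_ne_nil hne
      refine ⟨d, 2*n - a, n, hd, by omega, by omega, ⟨-y, x + 2*y, by linear_combination hxy⟩, ?_⟩
      have : opLeft (t ++ [g]) = 2 :: (t ++ [g + 1]) := by
        simp [opLeft, List.dropLast_concat, List.getLastD_concat]
      rw [this, Pm_cons, Pm_concat, Mx_succ g, ← mm_assoc (Pm t), ← Pm_concat, hPm,
        ← mm_assoc, left_eq]
  | @right m hG ih =>
      obtain ⟨d, n, a, hd, ha, han, ⟨x, y, hxy⟩, hPm⟩ := ih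
      obtain ⟨hne, hge⟩ := G_facts hG
      obtain ⟨c, t, rfl⟩ := List.exists_cons_of_ne_nil hne
      refine ⟨d, n + a, a, hd, ha, by omega, ⟨x, y - x, by linear_combination hxy⟩, ?_⟩
      have : opRight (c :: t) = (c + 1) :: (t ++ [2]) := by simp [opRight]
      rw [this, Pm_cons, Mx_succ' c, mm_assoc, ← Pm_cons, ← List.cons_append, Pm_concat,
        hPm, ← mm_assoc, right_eq]

lemma matrix_of_hj {l : List ℤ} (hne : l ≠ []) (hge : ∀ b ∈ l, 2 ≤ b)
    {d n a : ℤ} (hd : 1 ≤ d) (ha : 1 ≤ a) (han : a < n)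
    (hhj : hj l = (d * n ^ 2 : ℚ) / (d * n * a - 1)) :
    Pm l = Tm d n a := by
  rcases hP : Pm l with ⟨p, p', q, q'⟩
  obtain ⟨i1, i2, i3, i4, i5, i6, i7⟩ := Pfacts l hne hge p p' q q' hP
  have hn2 : 2 ≤ n := by omega
  have hn2 : 2 ≤ n := by omega
  have hdn : 2 ≤ d * n := by
    nlinarith [mul_nonneg (by omega : (0:ℤ) ≤ d - 1) (by omega : (0:ℤ) ≤ n)]
  have hdna : 2 ≤ d * n * a := by
    nlinarith [mul_nonneg (by omega : (0:ℤ) ≤ d * n) (by omega : (0:ℤ) ≤ a - 1)]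
  have hden : (0:ℤ) < d * n * a - 1 := by omega
  have hn2pos : (0:ℤ) < n ^ 2 := by positivity
  have hdn2pos : (0:ℤ) < d * n ^ 2 := mul_pos (by omega) hn2pos
  have hppos : (0:ℤ) < p := by omega
  have hcross : p * (d * n * a - 1) = d * n ^ 2 * q := by
    have h1 := hj_eq l hne hge
    rw [hP] at h1
    simp only at h1
    rw [h1] at hhj
    have hq0 : ((q : ℚ)) ≠ 0 := by exact_mod_cast (show q ≠ 0 by omega)
    have hd0 : ((d : ℚ) * n * a - 1) ≠ 0 := by
      have : ((d * n * a - 1 : ℤ) : ℚ) ≠ 0 := by exact_mod_cast hden.ne'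
      push_cast at this
      convert this using 2
    rw [div_eq_div_iff hq0 hd0] at hhj
    have : ((p * (d * n * a - 1) : ℤ) : ℚ) = ((d * n ^ 2 * q : ℤ) : ℚ) := by
      push_cast
      linear_combination hhj
    exact_mod_cast this
  have hpq : IsCoprime p q := ⟨q', -p', by linear_combination i7⟩
  have hco : IsCoprime (d * n ^ 2) (d * n * a - 1) :=
    ⟨1 - d * a * (n - a), d * n * (n - a) - 1, by ring⟩
  have hdvd1 : (d * n ^ 2) ∣ p := hco.dvd_of_dvd_mul_right ⟨q, hcross⟩
  have hdvd2 : p ∣ d * n ^ 2 := by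
    refine hpq.dvd_of_dvd_mul_right ⟨d * n * a - 1, ?_⟩
    linear_combination -hcross
  have hpeq : p = d * n ^ 2 := Int.dvd_antisymm (by omega) (by omega) hdvd2 hdvd1
  have hqeq : q = d * n * a - 1 := by
    have h2 := hcross
    rw [hpeq] at h2
    have h3 : (d * n ^ 2) * q = (d * n ^ 2) * (d * n * a - 1) := by linear_combination -h2
    exact mul_left_cancel₀ hdn2pos.ne' h3
  subst hpeq hqeq
  set T1 := d * n * (n - a) - 1 with hT1
  have hident : (d * n * a - 1) * T1 - (d * n ^ 2) * (d * a * (n - a) - 1) = 1 := by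
    rw [hT1]; ring
  have hdet : (d * n * a - 1) * (-p') - (d * n ^ 2) * (-q') = 1 := by linear_combination i7
  have hdvd3 : (d * n ^ 2) ∣ (-p' - T1) := by
    refine hpq.dvd_of_dvd_mul_left ⟨(-q') - (d * a * (n - a) - 1), ?_⟩
    linear_combination hdet - hident
  have hT1b1 : 1 ≤ T1 := by
    have : d * n ≤ d * n * (n - a) := by
      nlinarith [mul_nonneg (by omega : (0:ℤ) ≤ d * n) (by omega : (0:ℤ) ≤ n - a - 1)]
    omega
  have hT1b2 : T1 < d * n ^ 2 := by
    have : d * n * (n - a) ≤ d * n ^ 2 := by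
      nlinarith [mul_nonneg (by omega : (0:ℤ) ≤ d * n) (by omega : (0:ℤ) ≤ a)]
    omega
  have hp'b1 : 1 ≤ -p' := by omega
  have hp'b2 : -p' < d * n ^ 2 := by omega
  have hz : -p' - T1 = 0 := Int.eq_zero_of_abs_lt_dvd hdvd3 (abs_lt.mpr ⟨by omega, by omega⟩)
  have hp'eq : p' = -T1 := by omega
  have hq'eq : q' = -(d * a * (n - a) - 1) := by
    have h4 : (d * n ^ 2) * q' = (d * n ^ 2) * (-(d * a * (n - a) - 1)) := by
      rw [hp'eq] at i7
      linear_combination i7 - hident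
    exact mul_left_cancel₀ hdn2pos.ne' h4
  rw [hp'eq, hq'eq]
  simp [Tm, hT1]

lemma matrix_to_G : ∀ N : ℕ, ∀ (l : List ℤ) (d n a : ℤ), l ≠ [] → (∀ b ∈ l, 2 ≤ b) →
    1 ≤ d → 1 ≤ a → a < n → IsCoprime n a → n.natAbs ≤ N → Pm l = Tm d n a → G l := by
  intro N
  induction N with
  | zero =>
      intro l d n a _ _ _ ha han _ hN _
      omega
  | succ N IH =>
      intro l d n a hne hge hd ha han hcop hN hPm
      have hn2 : 2 ≤ n := by omega
      have hdn : 2 ≤ d * n := by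
        nlinarith [mul_nonneg (by omega : (0:ℤ) ≤ d - 1) (by omega : (0:ℤ) ≤ n)]
      have hdna : 2 ≤ d * n * a := by
        nlinarith [mul_nonneg (by omega : (0:ℤ) ≤ d * n) (by omega : (0:ℤ) ≤ a - 1)]
      obtain ⟨b, t, rfl⟩ := List.exists_cons_of_ne_nil hne
      have hb : 2 ≤ b := hge b (by simp)
      rcases List.eq_nil_or_concat t with rfl | ⟨t₀, g, rfl⟩
      · -- singleton case
        simp only [Pm, Tm, Prod.mk.injEq] at hPm
        obtain ⟨e1, e2, e3, e4⟩ := hPm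
        have hda1 : d * a * (n - a) = 1 := by omega
        have h1a : 1 ≤ d * a := by
          nlinarith [mul_nonneg (by omega : (0:ℤ) ≤ d) (by omega : (0:ℤ) ≤ a - 1)]
        have h1b : d * a ≤ d * a * (n - a) :=
          le_mul_of_one_le_right (by omega) (by omega)
        have h1c : d ≤ d * a := le_mul_of_one_le_right (by omega) ha
        have h1d : a ≤ d * a := le_mul_of_one_le_left (by omega) hd
        have hd1 : d = 1 := by omega
        have ha1 : a = 1 := by omega
        have hn_eq : n = 2 := by
          subst hd1 ha1
          omega
        have hb4 : b = 4 := by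
          subst hd1 hn_eq
          omega
        rw [hb4]
        exact G.four
      · -- length ≥ 2; t = t₀.concat g
        rw [List.concat_eq_append] at *
        have hg : 2 ≤ g := hge g (by simp)
        have ht₀ : ∀ x ∈ t₀, 2 ≤ x := fun x hx => hge x (by simp [hx])
        -- cons view
        rcases hu : Pm (t₀ ++ [g]) with ⟨u, u', v, v'⟩
        obtain ⟨i1, i2, i3, i4, i5, i6, i7⟩ := Pfacts (t₀ ++ [g]) (by simp)
          (fun x hx => hge x (List.mem_cons_of_mem _ hx)) u u' v v' hu
        have hq_eq : d * n * a - 1 = u := by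
          have : (Pm (b :: (t₀ ++ [g]))).2.2.1 = u := by rw [Pm_cons_q, hu]
          rw [hPm] at this
          exact this
        have hp_eq : d * n ^ 2 = b * u - v := by
          have : (Pm (b :: (t₀ ++ [g]))).1 = b * u - v := by rw [Pm_cons_fst, hu]
          rw [hPm] at this
          exact this
        -- concat view
        have hlconcat : b :: (t₀ ++ [g]) = (b :: t₀) ++ [g] := by simp
        rcases hA : Pm (b :: t₀) with ⟨A, A', B, B'⟩
        obtain ⟨j1, j2, j3, j4, j5, j6, j7⟩ := Pfacts (b :: t₀) (by simp)
          (fun x hx => by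
            rcases List.mem_cons.mp hx with rfl | hx'
            · exact hb
            · exact ht₀ x hx') A A' B B' hA
        have hconcat : Pm ((b :: t₀) ++ [g]) = mm (Pm (b :: t₀)) (Mx g) := Pm_concat _ _
        rw [hA] at hconcat
        have hPm' := hPm
        rw [hlconcat, hconcat] at hPm'
        simp only [mm, Mx, Tm, Prod.mk.injEq] at hPm'
        obtain ⟨k1, k2, k3, k4⟩ := hPm'
        -- k1 : A * g + A' * 1 = d*n^2 ; k2 : A * -1 + A' * 0 = -(d*n*(n-a)-1)
        have hA_eq : A = d * n * (n - a) - 1 := by omega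
        rcases lt_trichotomy n (2 * a) with hlt | heq2 | hgt
        · -- n < 2a : left operation
          have hkey : d * n ≤ d * n * (2 * a - n) :=
            le_mul_of_one_le_right (by omega) (by omega)
          have hple : d * n ^ 2 ≤ 2 * (d * n * a - 1) := by nlinarith
          have hb2 : b = 2 := by
            by_contra hb3
            have h3u : 3 * u ≤ b * u :=
              mul_le_mul_of_nonneg_right (by omega) (by omega)
            linarith
          have hg3 : 3 ≤ g := by
            by_contra hg2
            have hgle : g = 2 := by omega
            -- d*n^2 = A*2 + A'  with A' = -(old p₂), 1 ≤ -A' < A... need bound on A'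
            -- j: facts about (b :: t₀): 1 ≤ B, B < A, A' < B' ≤ 0, etc.
            have hA'le : A' ≤ -1 := by omega
            rw [hgle] at k1
            have : d * n ^ 2 ≤ 2 * A - 1 := by linarith
            rw [hA_eq] at this
            nlinarith
          -- build l'
          have hMg : Mx g = mm (Mx (g - 1)) (1, 0, -1, 1) := by
            have := Mx_succ (g - 1)
            rw [show g - 1 + 1 = g by ring] at this
            exact this
          have hPl : Pm (b :: (t₀ ++ [g])) = mm (mm (Mx 2) (Pm (t₀ ++ [g - 1]))) (1, 0, -1, 1) := by
            rw [hb2, Pm_cons, Pm_concat, Pm_concat, hMg]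
            simp only [← mm_assoc]
          have hTarget : mm (mm (Mx 2) (Tm d a (2 * a - n))) (1, 0, -1, 1) = Tm d n a := by
            have := left_eq d a (2 * a - n)
            rw [show 2 * a - (2 * a - n) = n by ring] at this
            exact this
          have hPl' : Pm (t₀ ++ [g - 1]) = Tm d a (2 * a - n) := by
            apply cancel_left
            rw [← hPl, hPm, hTarget]
          obtain ⟨x, y, hxy⟩ := hcop
          have hG' : G (t₀ ++ [g - 1]) := by
            apply IH (t₀ ++ [g - 1]) d a (2 * a - n) (by simp)
              (fun z hz => by
                rcases List.mem_append.mp hz with hz' | hz'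
                · exact ht₀ z hz'
                · simp at hz'
                  omega)
              hd (by omega) (by omega)
              ⟨2 * x + y, -x, by linear_combination hxy⟩
              (by omega) hPl'
          have hop : opLeft (t₀ ++ [g - 1]) = b :: (t₀ ++ [g]) := by
            rw [opLeft, List.dropLast_concat, List.getLastD_concat, hb2,
              show g - 1 + 1 = g by ring]
          rw [← hop]
          exact G.left hG'
        · -- n = 2a : base chain
          have ha1 : a = 1 := by
            have hdvd : a ∣ n := ⟨2, by omega⟩
            have := hcop.isUnit_of_dvd' hdvd dvd_rfl
            rcases Int.isUnit_iff.mp this with h1 | h1 <;> omega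
          have hn_eq : n = 2 := by omega
          subst ha1 hn_eq
          have hd2 : 2 ≤ d := by
            -- u = d*2*1 - 1 = 2d - 1 and u ≥ 2 (since t nonempty, u > v ≥ 1)
            omega
          obtain ⟨k, hkd⟩ : ∃ k : ℕ, (k : ℤ) = d - 2 :=
            ⟨(d - 2).toNat, Int.toNat_of_nonneg (by omega)⟩
          have hchain : Pm (3 :: (List.replicate k 2 ++ [3])) = Tm d 2 1 := by
            rw [chain_Pm3, hkd]
            norm_num
          have : b :: (t₀ ++ [g]) = 3 :: (List.replicate k 2 ++ [3]) := by
            refine uniq _ (3 :: (List.replicate k 2 ++ [3])) hne (List.cons_ne_nil _ _) hge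
              (chain_ge k) ?_ ?_
            · rw [hPm, hchain]
            · rw [hPm, hchain]
          rw [this]
          exact G.chain k
        · -- n > 2a : right operation
          have hkey : d * n ≤ d * n * (n - 2 * a) :=
            le_mul_of_one_le_right (by omega) (by omega)
          have hg2 : g = 2 := by
            by_contra hg3
            have h3A : 3 * A ≤ g * A := mul_le_mul_of_nonneg_right (by omega) (by omega)
            have hA'b : -A' < A := by omega
            have h2A : 2 * A + 1 ≤ d * n ^ 2 := by nlinarith
            rw [hA_eq] at h2A
            have hr : d * n ^ 2 = 2 * (d * n * (n - a)) - d * n * (n - 2 * a) := by ring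
            linarith
          have hb3 : 3 ≤ b := by
            by_contra hb2
            have hb2' : b = 2 := by omega
            rw [hb2'] at hp_eq
            have hring : d * n ^ 2 - 2 * (d * n * a - 1) = d * n * (n - 2 * a) + 2 := by ring
            linarith
          have hMb : Mx b = mm (1, 1, 0, 1) (Mx (b - 1)) := by
            have := Mx_succ' (b - 1)
            rw [show b - 1 + 1 = b by ring] at this
            exact this
          have hPl : Pm (b :: (t₀ ++ [g])) = mm (mm (1, 1, 0, 1) (Pm ((b - 1) :: t₀))) (Mx 2) := by
            rw [hlconcat, Pm_concat, Pm_cons, Pm_cons, hMb, hg2]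
            simp only [← mm_assoc]
          have hTarget : mm (mm (1, 1, 0, 1) (Tm d (n - a) a)) (Mx 2) = Tm d n a := by
            have := right_eq d (n - a) a
            rw [show n - a + a = n by ring] at this
            exact this
          have hPl' : Pm ((b - 1) :: t₀) = Tm d (n - a) a := by
            apply cancel_right
            rw [← hPl, hPm, hTarget]
          obtain ⟨x, y, hxy⟩ := hcop
          have hG' : G ((b - 1) :: t₀) := by
            apply IH ((b - 1) :: t₀) d (n - a) a (by simp)
              (fun z hz => by
                rcases List.mem_cons.mp hz with rfl | hz'
                · omega
                · exact ht₀ z hz')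
              hd ha (by omega)
              ⟨x, x + y, by linear_combination hxy⟩
              (by omega) hPl'
          have hop : opRight ((b - 1) :: t₀) = b :: (t₀ ++ [g]) := by
            rw [opRight, hg2]
            simp only [List.headI, List.tail]
            rw [show b - 1 + 1 = b by ring]
          rw [← hop]
          exact G.right hG'

/-- A finite sequence of integers each `≥ 2` is a T-chain datum if and only if
it belongs to the inductively generated family `G` (Kollár–Shepherd-Barron). -/
theorem stmt4 (l : List ℤ) : IsTChainDatum l ↔ G l := by
  constructor
  · rintro ⟨hne, hge, d, n, a, hd, ha, han, hgcd, hhj⟩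
    have hcop : IsCoprime n a := Int.isCoprime_iff_gcd_eq_one.mpr hgcd
    have hPm : Pm l = Tm d n a := matrix_of_hj hne hge hd ha han hhj
    exact matrix_to_G n.natAbs l d n a hne hge hd ha han hcop le_rfl hPm
  · intro hG
    obtain ⟨hne, hge⟩ := G_facts hG
    obtain ⟨d, n, a, hd, ha, han, hcop, hPm⟩ := G_matrix hG
    refine ⟨hne, hge, d, n, a, hd, ha, han, Int.isCoprime_iff_gcd_eq_one.mp hcop, ?_⟩
    rw [hj_eq l hne hge, hPm]
    show ((d * n ^ 2 : ℤ) : ℚ) / ((d * n * a - 1 : ℤ) : ℚ) = _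
    push_cast
    ring
end

section
/- If (b_1,…,b_r) is a sequence of integers with every b_i ≥ 2 whose Hirzebruch–Jung continued fraction equals d·n²/(d·n·a − 1) for integers d ≥ 1 and coprime n > a ≥ 1, then the reversed sequence (b_r,…,b_1) has Hirzebruch–Jung continued fraction equal to d·n²/(d·n·(n−a) − 1), with n > n − a ≥ 1 and gcd(n, n−a) = 1. In particular, the reverse of a T-chain datum is a T-chain datum with the same d and n. -/
/-- Convergent matrix `[[b₁,-1],[1,0]]⋯[[b_r,-1],[1,0]]` of a list, stored as
`(p, q, r, s)` for the matrix `[[p, r], [q, s]]`. -/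
def hjm : List ℤ → ℤ × ℤ × ℤ × ℤ
  | [] => (1, 0, 0, 1)
  | b :: l => (b * (hjm l).1 - (hjm l).2.1, (hjm l).1,
               b * (hjm l).2.2.1 - (hjm l).2.2.2, (hjm l).2.2.1)

lemma hjm_bounds (l : List ℤ) (h2 : ∀ b ∈ l, 2 ≤ b) :
    0 ≤ (hjm l).2.1 ∧ (hjm l).2.1 < (hjm l).1 := by
  induction l with
  | nil => simp [hjm]
  | cons b l ih =>
    have hb := h2 b (List.mem_cons_self ..)
    have ih' := ih (fun x hx => h2 x (List.mem_cons_of_mem _ hx))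
    simp only [hjm]
    refine ⟨by linarith [ih'.1, ih'.2], ?_⟩
    nlinarith [ih'.1, ih'.2]

lemma hjm_coprime (l : List ℤ) : IsCoprime (hjm l).1 (hjm l).2.1 := by
  induction l with
  | nil => simp [hjm, isCoprime_one_left]
  | cons b l ih =>
    simp only [hjm]
    have h : b * (hjm l).1 - (hjm l).2.1 = -(hjm l).2.1 + (hjm l).1 * b := by ring
    rw [h]
    exact (ih.symm.neg_left).add_mul_left_left b

lemma hjm_det (l : List ℤ) :
    (hjm l).1 * (hjm l).2.2.2 - (hjm l).2.1 * (hjm l).2.2.1 = 1 := by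
  induction l with
  | nil => simp [hjm]
  | cons b l ih =>
    simp only [hjm]
    linear_combination ih

lemma hjm_append (l : List ℤ) (b : ℤ) :
    hjm (l ++ [b]) = ((hjm l).1 * b + (hjm l).2.2.1, (hjm l).2.1 * b + (hjm l).2.2.2,
      -(hjm l).1, -(hjm l).2.1) := by
  induction l with
  | nil => simp [hjm]
  | cons c l ih =>
    show hjm (c :: (l ++ [b])) = _
    simp only [hjm, ih]
    refine Prod.ext ?_ (Prod.ext ?_ (Prod.ext ?_ ?_)) <;> simp <;> ring

lemma hjm_reverse (l : List ℤ) :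
    hjm l.reverse = ((hjm l).1, -(hjm l).2.2.1, -(hjm l).2.1, (hjm l).2.2.2) := by
  induction l with
  | nil => simp [hjm]
  | cons b l ih =>
    rw [List.reverse_cons, hjm_append, ih]
    simp only [hjm]
    refine Prod.ext ?_ (Prod.ext ?_ (Prod.ext ?_ ?_)) <;> simp <;> ring

lemma hj_eq_s5 (l : List ℤ) (h2 : ∀ b ∈ l, 2 ≤ b) :
    hj l = ((hjm l).1 : ℚ) / (hjm l).2.1 := by
  induction l with
  | nil => simp [hj, hjm]
  | cons b l ih =>
    have h2' : ∀ x ∈ l, 2 ≤ x := fun x hx => h2 x (List.mem_cons_of_mem _ hx)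
    have hb := hjm_bounds l h2'
    have hp : (0:ℤ) < (hjm l).1 := lt_of_le_of_lt hb.1 hb.2
    have hpQ : ((hjm l).1 : ℚ) ≠ 0 := by exact_mod_cast hp.ne'
    rw [hj, ih h2']
    simp only [hjm]
    rw [one_div_div]
    push_cast
    field_simp
    try ring

lemma hjm_q_pos (l : List ℤ) (hne : l ≠ []) (h2 : ∀ b ∈ l, 2 ≤ b) :
    1 ≤ (hjm l).2.1 := by
  cases l with
  | nil => exact absurd rfl hne
  | cons b l =>
    have hb := hjm_bounds l (fun x hx => h2 x (List.mem_cons_of_mem _ hx))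
    simpa [hjm] using Int.add_one_le_of_lt (lt_of_le_of_lt hb.1 hb.2)


set_option maxHeartbeats 1000000 in
/-- If `(b₁,…,b_r)` has all entries `≥ 2` and HJ continued fraction
`d·n²/(d·n·a − 1)` with `d ≥ 1`, coprime `n > a ≥ 1`, then the reversed
sequence has HJ continued fraction `d·n²/(d·n·(n−a) − 1)`, with
`n > n − a ≥ 1` and `gcd(n, n−a) = 1`.  In particular the reverse of a
T-chain datum is a T-chain datum with the same `d` and `n`. -/
theorem stmt5 (l : List ℤ) (hne : l ≠ []) (h2 : ∀ b ∈ l, 2 ≤ b)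
    (d n a : ℤ) (hd : 1 ≤ d) (ha : 1 ≤ a) (han : a < n) (hcop : Int.gcd n a = 1)
    (hhj : hj l = (d * n ^ 2 : ℚ) / (d * n * a - 1)) :
    1 ≤ n - a ∧ n - a < n ∧ Int.gcd n (n - a) = 1 ∧
    hj l.reverse = (d * n ^ 2 : ℚ) / (d * n * (n - a) - 1) ∧
    IsTChainDatum l.reverse := by
  have h2rev : ∀ b ∈ l.reverse, 2 ≤ b := fun b hb => h2 b (List.mem_reverse.mp hb)
  have hrevne : l.reverse ≠ [] := by simpa using hne
  have hbounds := hjm_bounds l h2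
  have hq1 := hjm_q_pos l hne h2
  have hcop_pq := hjm_coprime l
  have hdet := hjm_det l
  have hval := hj_eq_s5 l h2
  have hbrev := hjm_bounds l.reverse h2rev
  have hvalrev := hj_eq_s5 l.reverse h2rev
  simp only [hjm_reverse] at hbrev hvalrev
  set p := (hjm l).1 with hp_def
  set q := (hjm l).2.1 with hq_def
  set r := (hjm l).2.2.1 with hr_def
  set s := (hjm l).2.2.2 with hs_def
  clear_value p q r s
  -- now p, q, r, s are opaque integers
  have hp1 : q < p := hbounds.2
  have hppos : (0:ℤ) < p := by omega
  have hn2 : 2 ≤ n := by omega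
  have hna2 : n ≤ n * a := by
    nlinarith [mul_nonneg (by omega : (0:ℤ) ≤ n) (by omega : (0:ℤ) ≤ a - 1)]
  have hdna : 2 ≤ d * n * a := by
    nlinarith [mul_nonneg (by omega : (0:ℤ) ≤ d - 1)
      (by nlinarith : (0:ℤ) ≤ n * a)]
  have hden : 1 ≤ d * n * a - 1 := by omega
  have hdn2nn : (0:ℤ) ≤ d * n ^ 2 := mul_nonneg (by omega) (sq_nonneg n)
  have hdnpos : (0:ℤ) < d * n := mul_pos (by omega) (by omega)
  have hdenQ : ((d:ℚ) * n * a - 1) ≠ 0 := by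
    have h := (by omega : (d * n * a - 1 : ℤ) ≠ 0)
    intro hc
    apply h
    have : ((d * n * a - 1 : ℤ) : ℚ) = 0 := by push_cast; linarith
    exact_mod_cast this
  have hqQ : ((q : ℤ) : ℚ) ≠ 0 := by exact_mod_cast (by omega : (q:ℤ) ≠ 0)
  -- cross multiply
  rw [hval] at hhj
  rw [div_eq_div_iff hqQ hdenQ] at hhj
  have key : p * (d * n * a - 1) = d * n ^ 2 * q := by exact_mod_cast hhj
  have hcop_dn : IsCoprime (d * n ^ 2) (d * n * a - 1) :=
    ⟨d * a ^ 2, -(d * n * a + 1), by ring⟩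
  -- p = d n², q = d n a − 1
  have hpdvd : p ∣ d * n ^ 2 :=
    hcop_pq.dvd_of_dvd_mul_right ⟨d * n * a - 1, key.symm⟩
  have hdndvd : d * n ^ 2 ∣ p := hcop_dn.dvd_of_dvd_mul_right ⟨q, key⟩
  have hp_eq : p = d * n ^ 2 := Int.dvd_antisymm (le_of_lt hppos) hdn2nn hpdvd hdndvd
  have hq_eq : q = d * n * a - 1 := by
    have h0 : d * n ^ 2 ≠ 0 := by rw [← hp_eq]; exact hppos.ne'
    rw [hp_eq] at key
    exact (mul_left_cancel₀ h0 key).symm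
  -- the reversed denominator is -r; identify it with d n (n−a) − 1
  have hrle : 0 ≤ -r := hbrev.1
  have hrlt : -r < p := hbrev.2
  have hcdvd : p ∣ q * (d * n * (n - a) - 1) - 1 :=
    ⟨d * a * (n - a) - 1, by rw [hq_eq, hp_eq]; ring⟩
  have hrdvd : p ∣ q * (-r) - 1 := ⟨-s, by linear_combination hdet⟩
  have hsum : p ∣ q * ((d * n * (n - a) - 1) + r) := by
    have h : q * ((d * n * (n - a) - 1) + r) =
        (q * (d * n * (n - a) - 1) - 1) - (q * (-r) - 1) := by ring
    rw [h]
    exact dvd_sub hcdvd hrdvd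
  have hdvd_cr : p ∣ (d * n * (n - a) - 1) + r := hcop_pq.dvd_of_dvd_mul_left hsum
  have hnna : 0 < d * n * (n - a) := mul_pos hdnpos (by omega)
  have hc0 : 0 ≤ d * n * (n - a) - 1 := by linarith
  have hle : d * n * (n - a) ≤ d * n * n :=
    mul_le_mul_of_nonneg_left (by omega) (le_of_lt hdnpos)
  have hclt : d * n * (n - a) - 1 < p := by
    rw [hp_eq]
    have hnn : d * n * n = d * n ^ 2 := by ring
    linarith
  have hcr : d * n * (n - a) - 1 = -r := by
    obtain ⟨k, hk⟩ := hdvd_cr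
    have hk0 : k = 0 := by
      rcases lt_trichotomy k 0 with h | h | h
      · exfalso
        have : p * k ≤ p * (-1) := mul_le_mul_of_nonneg_left (by omega) hppos.le
        linarith
      · exact h
      · exfalso
        have : p ≤ p * k := le_mul_of_one_le_right hppos.le (by omega)
        linarith
    rw [hk0, mul_zero] at hk
    linarith
  -- remaining numeric facts
  have hna1 : 1 ≤ n - a := by omega
  have hnan : n - a < n := by omega
  have hgcd : Int.gcd n (n - a) = 1 := by
    rw [← Int.isCoprime_iff_gcd_eq_one]
    have h1 : IsCoprime n a := Int.isCoprime_iff_gcd_eq_one.mpr hcop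
    have h2' : IsCoprime n (-a + n * 1) := h1.neg_right.add_mul_left_right 1
    rwa [show -a + n * 1 = n - a by ring] at h2'
  have hhjrev : hj l.reverse = (d * n ^ 2 : ℚ) / (d * n * (n - a) - 1) := by
    rw [hvalrev, ← hcr, hp_eq]
    push_cast
    ring_nf
  have hhjrev' : hj l.reverse = ((d:ℚ) * n ^ 2) / (d * n * ((n - a : ℤ) : ℚ) - 1) := by
    rw [hhjrev]; push_cast; ring_nf
  exact ⟨hna1, hnan, hgcd, hhjrev,
    hrevne, h2rev, d, n, n - a, hd, hna1, hnan, hgcd, hhjrev'⟩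
end

section
/- If (b_1,…,b_r) is a sequence of integers with every b_i ≥ 2 whose Hirzebruch–Jung continued fraction equals d·n²/(d·n·a − 1) for integers d ≥ 1 and coprime n > a ≥ 1, then b_1 + b_2 + ⋯ + b_r = 3r + 2 − d. (This identity underlies the computation of K² of the surfaces obtained by contracting such chains and smoothing.) -/
namespace TCAux

def pq : List ℤ → ℤ × ℤ
  | [] => (1, 0)
  | b :: l => (b * (pq l).1 - (pq l).2, (pq l).1)

def uv : List ℤ → ℤ × ℤ
  | [] => (0, 1)
  | b :: l => (b * (uv l).1 - (uv l).2, (uv l).1)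

@[simp] lemma pq_nil : pq [] = (1, 0) := rfl
@[simp] lemma uv_nil : uv [] = (0, 1) := rfl
@[simp] lemma pq_cons (b : ℤ) (l : List ℤ) :
    pq (b :: l) = (b * (pq l).1 - (pq l).2, (pq l).1) := rfl
@[simp] lemma uv_cons (b : ℤ) (l : List ℤ) :
    uv (b :: l) = (b * (uv l).1 - (uv l).2, (uv l).1) := rfl

lemma det (l : List ℤ) : (pq l).1 * (uv l).2 - (pq l).2 * (uv l).1 = 1 := by
  induction l with
  | nil => simp
  | cons b l ih => simp only [pq_cons, uv_cons]; linear_combination ih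

lemma bounds (l : List ℤ) (h2 : ∀ b ∈ l, 2 ≤ b) :
    1 ≤ (pq l).1 ∧ 0 ≤ (pq l).2 ∧ (pq l).2 < (pq l).1 ∧
    0 ≤ -(uv l).1 ∧ -(uv l).2 ≤ -(uv l).1 ∧
    1 ≤ (pq l).1 + (uv l).1 ∧ (pq l).2 + (uv l).2 ≤ (pq l).1 + (uv l).1 := by
  induction l with
  | nil => norm_num
  | cons b l ih =>
    have hb : 2 ≤ b := h2 b (by simp)
    obtain ⟨i1, i2, i3, i4, i5, i6, i7⟩ := ih (fun x hx => h2 x (by simp [hx]))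
    have m1 : 0 ≤ (b - 2) * (pq l).1 := mul_nonneg (by linarith) (by linarith)
    have m2 : 0 ≤ (b - 2) * (-(uv l).1) := mul_nonneg (by linarith) (by linarith)
    have m3 : 0 ≤ (b - 2) * ((pq l).1 + (uv l).1) := mul_nonneg (by linarith) (by linarith)
    simp only [pq_cons, uv_cons]
    refine ⟨by nlinarith, by linarith, by nlinarith, by nlinarith, by nlinarith,
      by nlinarith, by nlinarith⟩

lemma den_pos (l : List ℤ) (hne : l ≠ []) (h2 : ∀ b ∈ l, 2 ≤ b) : 1 ≤ (pq l).2 := by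
  cases l with
  | nil => exact absurd rfl hne
  | cons b l =>
    simpa using (bounds l (fun x hx => h2 x (by simp [hx]))).1

lemma append_single (l : List ℤ) (c : ℤ) :
    (pq (l ++ [c])).1 = c * (pq l).1 + (uv l).1 ∧
    (pq (l ++ [c])).2 = c * (pq l).2 + (uv l).2 ∧
    (uv (l ++ [c])).1 = -(pq l).1 ∧ (uv (l ++ [c])).2 = -(pq l).2 := by
  induction l with
  | nil => simp
  | cons b l ih =>
    obtain ⟨e1, e2, e3, e4⟩ := ih
    simp only [List.cons_append, pq_cons, uv_cons, e1, e2, e3, e4]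
    refine ⟨by ring, trivial, by ring, trivial⟩

lemma reverse_pq (l : List ℤ) :
    (pq l.reverse).1 = (pq l).1 ∧ (pq l.reverse).2 = -(uv l).1 ∧
    (uv l.reverse).1 = -(pq l).2 ∧ (uv l.reverse).2 = (uv l).2 := by
  induction l with
  | nil => simp
  | cons b l ih =>
    obtain ⟨e1, e2, e3, e4⟩ := ih
    obtain ⟨a1, a2, a3, a4⟩ := append_single l.reverse b
    simp only [List.reverse_cons, a1, a2, a3, a4, e1, e2, e3, e4, pq_cons, uv_cons]
    refine ⟨by ring, by ring, trivial, by ring⟩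

lemma hj_eq (l : List ℤ) (h2 : ∀ b ∈ l, 2 ≤ b) :
    hj l = ((pq l).1 : ℚ) / ((pq l).2 : ℚ) := by
  induction l with
  | nil => simp [hj]
  | cons b l ih =>
    have h2' : ∀ x ∈ l, 2 ≤ x := fun x hx => h2 x (by simp [hx])
    have hp1 : 1 ≤ (pq l).1 := (bounds l h2').1
    have hne : ((pq l).1 : ℚ) ≠ 0 := by exact_mod_cast (by linarith : (pq l).1 ≠ 0)
    rw [show hj (b :: l) = (b : ℚ) - 1 / hj l from rfl, ih h2', one_div_div, pq_cons]
    push_cast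
    field_simp



lemma coprimeT (d n a : ℤ) : IsCoprime (d * n ^ 2) (d * n * a - 1) :=
  ⟨1 - d * a * (n - a), d * n * (n - a) - 1, by ring⟩

lemma uvT (l : List ℤ) (h2 : ∀ b ∈ l, 2 ≤ b) (d n a : ℤ)
    (hd : 1 ≤ d) (ha : 1 ≤ a) (han : a < n)
    (hp : (pq l).1 = d * n ^ 2) (hq : (pq l).2 = d * n * a - 1) :
    (uv l).1 = -(d * n * (n - a) - 1) ∧ (uv l).2 = 1 - d * a * (n - a) := by
  have hdet := det l
  rw [hp, hq] at hdet
  obtain ⟨b1, b2, b3, b4, b5, b6, b7⟩ := bounds l h2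
  rw [hp] at b6
  have hdn : 2 ≤ d * n := by nlinarith
  have hx0 : 1 ≤ d * n * (n - a) - 1 := by nlinarith
  have hx1 : d * n * (n - a) - 1 < d * n ^ 2 := by nlinarith
  have hdvd : d * n ^ 2 ∣ (d * n * a - 1) * ((uv l).1 + (d * n * (n - a) - 1)) :=
    ⟨(uv l).2 - (1 - d * a * (n - a)), by linear_combination (-1 : ℤ) * hdet⟩
  have hwz : (uv l).1 + (d * n * (n - a) - 1) = 0 := by
    refine Int.eq_zero_of_abs_lt_dvd ((coprimeT d n a).dvd_of_dvd_mul_left hdvd) ?_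
    rw [abs_lt]
    constructor <;> linarith
  have hu : (uv l).1 = -(d * n * (n - a) - 1) := by linarith
  refine ⟨hu, ?_⟩
  have hP : (d * n ^ 2 : ℤ) ≠ 0 := by nlinarith
  have hz : d * n ^ 2 * ((uv l).2 - (1 - d * a * (n - a))) = 0 := by
    linear_combination hdet + (d * n * a - 1) * hu
  rcases mul_eq_zero.mp hz with h | h
  · exact absurd h hP
  · linarith

lemma L2 (m : List ℤ) : m ≠ [] → (∀ x ∈ m, 2 ≤ x) → ∀ k : ℤ, 1 ≤ k →
    (pq m).1 = 2 * k + 1 → (pq m).2 = 2 * k - 1 →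
    m.sum = 2 * (m.length : ℤ) + 1 ∧ (m.length : ℤ) = k := by
  induction m with
  | nil => intro h; exact absurd rfl h
  | cons b m' ih =>
    intro _ h2 k hk hp hq
    have hb : 2 ≤ b := h2 b (by simp)
    have h2' : ∀ x ∈ m', 2 ≤ x := fun x hx => h2 x (by simp [hx])
    simp only [pq_cons] at hp hq
    cases m' with
    | nil =>
      simp at hp hq
      have hk1 : k = 1 := by omega
      subst hk1
      simp
      omega
    | cons c m'' =>
      have hne'' : (c :: m'' : List ℤ) ≠ [] := by simp
      have hd1 : 1 ≤ (pq (c :: m'')).2 := den_pos _ hne'' h2'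
      obtain ⟨c1, c2, c3, _, _, _, _⟩ := bounds (c :: m'') h2'
      -- (pq m').1 = 2k-1, (pq m').2 = b*(2k-1) - (2k+1)
      have hp' : (pq (c :: m'')).1 = 2 * k - 1 := hq
      have hq' : (pq (c :: m'')).2 = b * (2 * k - 1) - (2 * k + 1) := by
        linear_combination b * hp' - hp
      have hb2 : b = 2 := by
        by_contra hb3
        have hb3 : 3 ≤ b := by omega
        have : 0 ≤ (b - 3) * (2 * k - 1) := mul_nonneg (by linarith) (by linarith)
        nlinarith [c3, hd1]
      subst hb2
      have hk2 : 2 ≤ k := by omega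
      obtain ⟨s1, s2⟩ := ih hne'' h2' (k - 1) (by linarith) (by linarith) (by linarith)
      constructor
      · simp only [List.sum_cons, List.length_cons] at *
        push_cast at *
        linarith
      · simp only [List.length_cons] at *
        push_cast at *
        linarith

lemma L1 (l : List ℤ) (hne : l ≠ []) (h2 : ∀ x ∈ l, 2 ≤ x) (d : ℤ) (hd : 1 ≤ d)
    (hp : (pq l).1 = 4 * d) (hq : (pq l).2 = 2 * d - 1) :
    l.sum = 3 * (l.length : ℤ) + 2 - d := by
  cases l with
  | nil => exact absurd rfl hne
  | cons b m =>
    have hb : 2 ≤ b := h2 b (by simp)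
    have h2' : ∀ x ∈ m, 2 ≤ x := fun x hx => h2 x (by simp [hx])
    simp only [pq_cons] at hp hq
    cases m with
    | nil =>
      simp at hp hq
      have hd1 : d = 1 := by linarith
      subst hd1
      simp
      omega
    | cons c m' =>
      have hne' : (c :: m' : List ℤ) ≠ [] := by simp
      have hd1 : 1 ≤ (pq (c :: m')).2 := den_pos _ hne' h2'
      obtain ⟨c1, c2, c3, _, _, _, _⟩ := bounds (c :: m') h2'
      have hp' : (pq (c :: m')).1 = 2 * d - 1 := hq
      have hq' : (pq (c :: m')).2 = b * (2 * d - 1) - 4 * d := by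
        linear_combination b * hp' - hp
      have hd2 : 2 ≤ d := by
        by_contra h
        have hd1' : d = 1 := by omega
        subst hd1'
        nlinarith
      have hb3 : b = 3 := by
        rcases lt_trichotomy b 3 with h | h | h
        · exfalso
          have hb2 : b = 2 := by omega
          subst hb2
          linarith
        · exact h
        · exfalso
          have hb4 : 4 ≤ b := by omega
          have : 0 ≤ (b - 4) * (2 * d - 1) := mul_nonneg (by linarith) (by linarith)
          nlinarith
      subst hb3
      obtain ⟨s1, s2⟩ := L2 (c :: m') hne' h2' (d - 1) (by linarith)
        (by linarith) (by linarith)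
      simp only [List.sum_cons, List.length_cons] at *
      push_cast at *
      linarith

set_option maxHeartbeats 2000000 in
lemma main : ∀ (N : ℕ) (l : List ℤ) (d n a : ℤ), n.toNat ≤ N → l ≠ [] →
    (∀ x ∈ l, 2 ≤ x) → 1 ≤ d → 1 ≤ a → a < n → IsCoprime n a →
    (pq l).1 = d * n ^ 2 → (pq l).2 = d * n * a - 1 →
    l.sum = 3 * (l.length : ℤ) + 2 - d := by
  intro N
  induction N with
  | zero =>
    intro l d n a hN _ _ _ ha han _ _ _
    omega
  | succ N ih =>
    intro l d n a hN hne h2 hd ha han hcop hp hq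
    by_cases hn2 : n = 2
    · subst hn2
      have ha1 : a = 1 := by omega
      subst ha1
      exact L1 l hne h2 d hd (by linarith [hp]) (by linarith [hq])
    have hn3 : 3 ≤ n := by omega
    have step : ∀ (l : List ℤ) (a : ℤ), l ≠ [] → (∀ x ∈ l, 2 ≤ x) → 1 ≤ a → a < n →
        IsCoprime n a → n < 2 * a → (pq l).1 = d * n ^ 2 → (pq l).2 = d * n * a - 1 →
        l.sum = 3 * (l.length : ℤ) + 2 - d := by
      clear hne h2 ha han hcop hp hq hn2
      intro l a hne h2 ha han hcop h2a hp hq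
      obtain ⟨hu, hv⟩ := uvT l h2 d n a hd ha han hp hq
      cases l with
      | nil => exact absurd rfl hne
      | cons b l' =>
        have hb : 2 ≤ b := h2 b (by simp)
        have h2' : ∀ x ∈ l', 2 ≤ x := fun x hx => h2 x (by simp [hx])
        simp only [pq_cons, uv_cons] at hp hq hu hv
        have hp' : (pq l').1 = d * n * a - 1 := hq
        have hne' : l' ≠ [] := by
          intro h
          subst h
          simp at hp'
          have h1 : 1 ≤ d * a := by nlinarith
          nlinarith [mul_le_mul_of_nonneg_left h1 (show (0:ℤ) ≤ n by linarith)]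
        have hq1 : 1 ≤ (pq l').2 := den_pos l' hne' h2'
        obtain ⟨d1, d2, d3, d4, d5, d6, d7⟩ := bounds l' h2'
        have hq' : (pq l').2 = b * (d * n * a - 1) - d * n ^ 2 := by
          linear_combination b * hp' - hp
        have hda : 1 ≤ d * a := by nlinarith
        have hdan : 1 ≤ d * a * (2 * a - n) := by nlinarith
        have hdn3 : 3 ≤ d * n := by nlinarith
        have hb2 : b = 2 := by
          by_contra h
          have hb3 : 3 ≤ b := by omega
          have m1 : 0 ≤ (b - 3) * (d * n * a - 1) := by
            refine mul_nonneg (by linarith) (by nlinarith)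
          have m2 : d * n * n ≤ d * n * (2 * a - 1) := by
            refine mul_le_mul_of_nonneg_left (by linarith) (by nlinarith)
          linarith [m1, m2, hq', d3, hp', hdn3]
        subst hb2
        have hu' : (uv l').1 = 1 - d * a * (n - a) := hv
        have hv' : (uv l').2 = 2 * (1 - d * a * (n - a)) + (d * n * (n - a) - 1) := by
          linear_combination 2 * hu' - hu
        obtain hcon | ⟨init, c, hc⟩ := l'.eq_nil_or_concat
        · exact absurd hcon hne'
        rw [List.concat_eq_append] at hc
        subst hc
        have h2i : ∀ x ∈ init, 2 ≤ x := fun x hx => h2' x (by simp [hx])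
        obtain ⟨a1, a2, a3, a4⟩ := append_single init c
        have hpi : (pq init).1 = d * a * (n - a) - 1 := by
          rw [a3] at hu'
          linarith
        have hqi : (pq init).2 = 2 * (d * a * (n - a)) - d * n * (n - a) - 1 := by
          rw [a4] at hv'
          linarith
        obtain ⟨e1, e2, e3, e4, e5, e6, e7⟩ := bounds init h2i
        have hc3 : 3 ≤ c := by
          by_contra h
          have hc2 : c ≤ 2 := by omega
          have m1 : 0 ≤ (2 - c) * (pq init).1 := mul_nonneg (by linarith) (by linarith)
          have m2 : d * n * a - 1 ≤ c * (pq init).1 := by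
            rw [a1] at hp'
            linarith
          linarith [m1, m2, hpi, hdan]
        have hmne : (init ++ [c - 1] : List ℤ) ≠ [] := by simp
        have h2m : ∀ x ∈ (init ++ [c - 1] : List ℤ), 2 ≤ x := by
          intro x hx
          rcases List.mem_append.mp hx with h | h
          · exact h2i x h
          · simp at h
            omega
        obtain ⟨f1, f2, f3, f4⟩ := append_single init (c - 1)
        have hpm : (pq (init ++ [c - 1])).1 = d * a ^ 2 := by
          rw [f1]
          rw [a1] at hp'
          linear_combination hp' - hpi
        have hqm : (pq (init ++ [c - 1])).2 = d * a * (2 * a - n) - 1 := by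
          rw [f2]
          rw [a2] at hq'
          linear_combination hq' - hqi
        have hcop' : IsCoprime a (2 * a - n) := by
          have h1 : IsCoprime a (-n + a * 2) := (hcop.symm.neg_right).add_mul_left_right 2
          have he : -n + a * 2 = 2 * a - n := by ring
          rwa [he] at h1
        have hN' : a.toNat ≤ N := by omega
        have hsum := ih (init ++ [c - 1]) d a (2 * a - n) hN' hmne h2m hd (by linarith)
          (by linarith) hcop' hpm hqm
        have hls : (2 :: (init ++ [c])).sum = (init ++ [c - 1]).sum + 3 := by
          simp only [List.sum_cons, List.sum_append, List.sum_singleton]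
          ring
        have hll : ((2 :: (init ++ [c])).length : ℤ) = ((init ++ [c - 1]).length : ℤ) + 1 := by
          simp only [List.length_cons, List.length_append, List.length_singleton]
          push_cast
          ring
        rw [hls, hll, hsum]
        ring
    rcases lt_trichotomy (2 * a) n with h | h | h
    · obtain ⟨hu, hv⟩ := uvT l h2 d n a hd ha han hp hq
      obtain ⟨r1, r2, r3, r4⟩ := reverse_pq l
      have hrne : l.reverse ≠ [] := by simpa using hne
      have hr2 : ∀ x ∈ l.reverse, 2 ≤ x := fun x hx => h2 x (List.mem_reverse.mp hx)
      have hcop2 : IsCoprime n (n - a) := by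
        have h1 : IsCoprime n (-a + n * 1) := (hcop.neg_right).add_mul_left_right 1
        have he : -a + n * 1 = n - a := by ring
        rwa [he] at h1
      have hres := step l.reverse (n - a) hrne hr2 (by linarith) (by linarith) hcop2
        (by linarith) (by rw [r1]; exact hp)
        (by rw [r2, hu]; ring)
      rw [List.sum_reverse, List.length_reverse] at hres
      exact hres
    · exfalso
      have hdvd : a ∣ n := ⟨2, by linarith⟩
      have hun := hcop.isUnit_of_dvd' hdvd dvd_rfl
      rw [Int.isUnit_iff] at hun
      omega
    · exact step l a hne h2 ha han hcop h hp hq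

end TCAux


/-- If `(b₁,…,b_r)` has all entries `≥ 2` and HJ continued fraction
`d·n²/(d·n·a − 1)` with `d ≥ 1`, coprime `n > a ≥ 1`, then
`b₁ + ⋯ + b_r = 3r + 2 − d`. -/
theorem stmt6 (l : List ℤ) (hne : l ≠ []) (h2 : ∀ b ∈ l, 2 ≤ b)
    (d n a : ℤ) (hd : 1 ≤ d) (ha : 1 ≤ a) (han : a < n) (hcop : Int.gcd n a = 1)
    (hhj : hj l = (d * n ^ 2 : ℚ) / (d * n * a - 1)) :
    l.sum = 3 * (l.length : ℤ) + 2 - d := by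
  have hcop' : IsCoprime n a := Int.isCoprime_iff_gcd_eq_one.mpr hcop
  have hn2 : 2 ≤ n := by linarith
  have hda : 1 ≤ d * a := by nlinarith
  have hdna : 2 ≤ d * n * a := by
    nlinarith [mul_le_mul_of_nonneg_left hda (show (0:ℤ) ≤ n by linarith)]
  have hq1 : 1 ≤ (TCAux.pq l).2 := TCAux.den_pos l hne h2
  have hp1 : 1 ≤ (TCAux.pq l).1 := (TCAux.bounds l h2).1
  have hA1 : 1 ≤ d * n ^ 2 := by nlinarith
  rw [TCAux.hj_eq l h2] at hhj
  have hQ : ((TCAux.pq l).2 : ℚ) ≠ 0 := by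
    exact_mod_cast (show (TCAux.pq l).2 ≠ 0 by omega)
  have hB : ((d : ℚ) * (n : ℚ) * (a : ℚ) - 1) ≠ 0 := by
    have h2' : (2 : ℚ) ≤ (d : ℚ) * (n : ℚ) * (a : ℚ) := by exact_mod_cast hdna
    linarith
  rw [div_eq_div_iff hQ hB] at hhj
  have key : (TCAux.pq l).1 * (d * n * a - 1) = d * n ^ 2 * (TCAux.pq l).2 := by
    exact_mod_cast hhj
  have cop1 : IsCoprime ((TCAux.pq l).1) ((TCAux.pq l).2) :=
    ⟨(TCAux.uv l).2, -(TCAux.uv l).1, by linear_combination TCAux.det l⟩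
  have cop2 := TCAux.coprimeT d n a
  have dv1 : (TCAux.pq l).1 ∣ d * n ^ 2 :=
    cop1.dvd_of_dvd_mul_right ⟨d * n * a - 1, key.symm⟩
  have dv2 : d * n ^ 2 ∣ (TCAux.pq l).1 :=
    cop2.dvd_of_dvd_mul_right ⟨(TCAux.pq l).2, key⟩
  have hPA : (TCAux.pq l).1 = d * n ^ 2 :=
    Int.dvd_antisymm (by linarith) (by linarith) dv1 dv2
  have hQB : (TCAux.pq l).2 = d * n * a - 1 := by
    rw [hPA] at key
    have hA0 : (d * n ^ 2 : ℤ) ≠ 0 := by linarith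
    exact (mul_left_cancel₀ hA0 key).symm
  exact TCAux.main n.toNat l d n a le_rfl hne h2 hd ha han hcop' hPA hQB
end

section
/- Each of the distinct sequences contracted in the construction of a simply connected minimal surface of general type with p_g = 1, q = 0, K² = 5 is a T-chain datum; explicitly: [2,3,8,2,2,2,3,3] = 784/475 = 1·28²/(1·28·17 − 1), [7,2,2,2] = 25/4 = 1·5²/(1·5·1 − 1), [3,5,3,2] = 64/23 = 1·8²/(1·8·3 − 1), [3,3] = 8/3 = 2·2²/(2·2·1 − 1), and [4] = 4 = 1·2²/(1·2·1 − 1). Hence the seven chains of P¹'s listed in the construction contract to cyclic quotient singularities of class T. -/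
/-- The distinct chains contracted in the `K² = 5` construction are T-chain
data: `[2,3,8,2,2,2,3,3] = 784/475 = 1·28²/(1·28·17 − 1)`,
`[7,2,2,2] = 25/4 = 1·5²/(1·5·1 − 1)`, `[3,5,3,2] = 64/23 = 1·8²/(1·8·3 − 1)`,
`[3,3] = 8/3 = 2·2²/(2·2·1 − 1)`, `[4] = 4 = 1·2²/(1·2·1 − 1)`. -/
theorem stmt15 :
    (hj [2, 3, 8, 2, 2, 2, 3, 3] = 784 / 475 ∧
      hj [2, 3, 8, 2, 2, 2, 3, 3] = ((1 : ℚ) * 28 ^ 2) / (1 * 28 * 17 - 1) ∧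
      IsTChainDatum [2, 3, 8, 2, 2, 2, 3, 3]) ∧
    (hj [7, 2, 2, 2] = 25 / 4 ∧
      hj [7, 2, 2, 2] = ((1 : ℚ) * 5 ^ 2) / (1 * 5 * 1 - 1) ∧
      IsTChainDatum [7, 2, 2, 2]) ∧
    (hj [3, 5, 3, 2] = 64 / 23 ∧
      hj [3, 5, 3, 2] = ((1 : ℚ) * 8 ^ 2) / (1 * 8 * 3 - 1) ∧
      IsTChainDatum [3, 5, 3, 2]) ∧
    (hj [3, 3] = 8 / 3 ∧
      hj [3, 3] = ((2 : ℚ) * 2 ^ 2) / (2 * 2 * 1 - 1) ∧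
      IsTChainDatum [3, 3]) ∧
    (hj [4] = 4 ∧
      hj [4] = ((1 : ℚ) * 2 ^ 2) / (1 * 2 * 1 - 1) ∧
      IsTChainDatum [4]) := by
  have e1 : hj [2, 3, 8, 2, 2, 2, 3, 3] = 784 / 475 := by norm_num [hj]
  have e2 : hj [7, 2, 2, 2] = 25 / 4 := by norm_num [hj]
  have e3 : hj [3, 5, 3, 2] = 64 / 23 := by norm_num [hj]
  have e4 : hj [3, 3] = 8 / 3 := by norm_num [hj]
  have e5 : hj [4] = 4 := by norm_num [hj]
  refine ⟨⟨e1, by rw [e1]; norm_num, by simp, by decide, 1, 28, 17, ?_, ?_, ?_, by decide, by rw [e1]; norm_num⟩,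
    ⟨e2, by rw [e2]; norm_num, by simp, by decide, 1, 5, 1, ?_, ?_, ?_, by decide, by rw [e2]; norm_num⟩,
    ⟨e3, by rw [e3]; norm_num, by simp, by decide, 1, 8, 3, ?_, ?_, ?_, by decide, by rw [e3]; norm_num⟩,
    ⟨e4, by rw [e4]; norm_num, by simp, by decide, 2, 2, 1, ?_, ?_, ?_, by decide, by rw [e4]; norm_num⟩,
    ⟨e5, by rw [e5]; norm_num, by simp, by decide, 1, 2, 1, ?_, ?_, ?_, by decide, by rw [e5]; norm_num⟩⟩ <;> norm_num
end
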